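/- arXiv:1211.1069 — 4 statements merged into one kernel-verified Lean document; each statement's English description precedes it below -/
import Mathlib

section
/- For every 1-periodic locally integrable function w : ℝ² → ℝ with ∫_{[0,1)²} |w| < ∞, the interpolant Π_h w satisfies ‖Π_h w‖_{L¹([0,1)²)} ≤ ‖w‖_{L¹([0,1)²)}. -/
open MeasureTheory Set
open scoped ENNReal NNReal

noncomputable section

/-- One period: `Ω = [0,1)²`. -/
def Omg : Set (ℝ × ℝ) := Ico (0 : ℝ) 1 ×ˢ Ico (0 : ℝ) 1

/-- `f : ℝ² → ℝ` is 1-periodic in each variable. -/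
def Periodic2 (f : ℝ × ℝ → ℝ) : Prop :=
  (∀ z : ℝ × ℝ, f (z.1 + 1, z.2) = f z) ∧ ∀ z : ℝ × ℝ, f (z.1, z.2 + 1) = f z

/-- `f` coincides on `T` with a bilinear polynomial `a + b x¹ + c x² + d x¹x²`. -/
def IsBilinearOn (f : ℝ × ℝ → ℝ) (T : Set (ℝ × ℝ)) : Prop :=
  ∃ a b c d : ℝ, ∀ z ∈ T, f z = a + b * z.1 + c * z.2 + d * (z.1 * z.2)

/-- The cell `T_{k,l} = [k h₁,(k+1)h₁] × [l h₂,(l+1)h₂]`. -/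
def cell (h₁ h₂ : ℝ) (k l : ℤ) : Set (ℝ × ℝ) :=
  Icc ((k : ℝ) * h₁) (((k : ℝ) + 1) * h₁) ×ˢ Icc ((l : ℝ) * h₂) (((l : ℝ) + 1) * h₂)

/-- `Q = [-h₁/2, h₁/2] × [-h₂/2, h₂/2]`. -/
def Qset (h₁ h₂ : ℝ) : Set (ℝ × ℝ) :=
  Icc (-(h₁ / 2)) (h₁ / 2) ×ˢ Icc (-(h₂ / 2)) (h₂ / 2)

/-- The nodal value `W_{k,l} = (1/(h₁h₂)) ∫_Q w(z_{k,l} + ζ) dζ`. -/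
def nodalAvg (h₁ h₂ : ℝ) (w : ℝ × ℝ → ℝ) (k l : ℤ) : ℝ :=
  (h₁ * h₂)⁻¹ * ∫ ζ in Qset h₁ h₂, w ((k : ℝ) * h₁ + ζ.1, (l : ℝ) * h₂ + ζ.2)

/-- `Pw` is the interpolant `Π_h w`: continuous, 1-periodic in each variable,
bilinear on each cell, with nodal values `W_{k,l}`. -/
def IsInterpolant (h₁ h₂ : ℝ) (w Pw : ℝ × ℝ → ℝ) : Prop :=
  Continuous Pw ∧ Periodic2 Pw ∧ (∀ k l : ℤ, IsBilinearOn Pw (cell h₁ h₂ k l)) ∧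
    ∀ k l : ℤ, Pw ((k : ℝ) * h₁, (l : ℝ) * h₂) = nodalAvg h₁ h₂ w k l

/-- 1D partition of `[c, c+1)` into `N` half-open intervals of length `h = 1/N`. -/
lemma oneD_union (N : ℕ) (hN : 0 < N) (h : ℝ) (hh : h = 1 / N) (c : ℝ) :
    ⋃ k ∈ Finset.range N, Ico (c + (k : ℝ) * h) (c + ((k : ℝ) + 1) * h) = Ico c (c + 1) := by
  have hNpos : (0:ℝ) < N := by exact_mod_cast hN
  have hpos : 0 < h := by rw [hh]; positivity
  have hNh : (N : ℝ) * h = 1 := by rw [hh]; field_simp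
  ext x
  simp only [Set.mem_iUnion, Finset.mem_range, Set.mem_Ico, exists_prop]
  constructor
  · rintro ⟨k, hk, h1, h2⟩
    have hk' : (k:ℝ) + 1 ≤ N := by exact_mod_cast hk
    constructor
    · nlinarith [hpos, (Nat.cast_nonneg k : (0:ℝ) ≤ k)]
    · nlinarith
  · rintro ⟨h1, h2⟩
    set k : ℤ := ⌊(x - c) / h⌋ with hkdef
    have hxc : 0 ≤ (x - c) / h := div_nonneg (by linarith) hpos.le
    have hk0 : 0 ≤ k := Int.floor_nonneg.2 hxc
    have hfl : (k : ℝ) ≤ (x - c) / h := Int.floor_le _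
    have hfl2 : (x - c) / h < (k : ℝ) + 1 := Int.lt_floor_add_one _
    have hkN : k < N := by
      have : (x - c) / h < (N : ℝ) := by
        rw [div_lt_iff₀ hpos]
        nlinarith
      exact_mod_cast (Int.floor_lt.2 (by exact_mod_cast this))
    have hle : (k : ℝ) * h ≤ x - c := by
      rw [← le_div_iff₀ hpos]; exact hfl
    have hlt : x - c < ((k : ℝ) + 1) * h := by
      rw [← div_lt_iff₀ hpos]; exact hfl2
    have hcast : ((k.toNat : ℕ) : ℝ) = (k : ℝ) := by
      have h' : (k.toNat : ℤ) = k := Int.toNat_of_nonneg hk0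
      exact_mod_cast congrArg (fun n : ℤ => (n : ℝ)) h'
    refine ⟨k.toNat, by omega, ?_, ?_⟩
    · rw [hcast]; linarith
    · rw [hcast]; linarith

lemma oneD_disj (h : ℝ) (hpos : 0 < h) (c : ℝ) {k k' : ℕ} (hkk : k ≠ k') :
    Disjoint (Ico (c + (k : ℝ) * h) (c + ((k : ℝ) + 1) * h))
      (Ico (c + (k' : ℝ) * h) (c + ((k' : ℝ) + 1) * h)) := by
  rw [Set.Ico_disjoint_Ico]
  rcases lt_or_gt_of_ne hkk with hlt | hlt
  · have : (k:ℝ) + 1 ≤ (k':ℝ) := by exact_mod_cast hlt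
    calc min (c + ((k:ℝ)+1)*h) (c + ((k':ℝ)+1)*h) ≤ c + ((k:ℝ)+1)*h := min_le_left _ _
      _ ≤ c + (k':ℝ)*h := by nlinarith
      _ ≤ max (c + (k:ℝ)*h) (c + (k':ℝ)*h) := le_max_right _ _
  · have : (k':ℝ) + 1 ≤ (k:ℝ) := by exact_mod_cast hlt
    calc min (c + ((k:ℝ)+1)*h) (c + ((k':ℝ)+1)*h) ≤ c + ((k':ℝ)+1)*h := min_le_right _ _
      _ ≤ c + (k:ℝ)*h := by nlinarith
      _ ≤ max (c + (k:ℝ)*h) (c + (k':ℝ)*h) := le_max_left _ _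

lemma twoD_partition (N₁ N₂ : ℕ) (hN₁ : 0 < N₁) (hN₂ : 0 < N₂) (h₁ h₂ : ℝ)
    (hh₁ : h₁ = 1 / N₁) (hh₂ : h₂ = 1 / N₂) (c₁ c₂ : ℝ) (g : ℝ × ℝ → ℝ)
    (hg : ∀ k l : ℕ, IntegrableOn g
      ((Ico (c₁ + (k : ℝ) * h₁) (c₁ + ((k : ℝ) + 1) * h₁)) ×ˢ
        (Ico (c₂ + (l : ℝ) * h₂) (c₂ + ((l : ℝ) + 1) * h₂))) volume) :
    ∫ z in Ico c₁ (c₁ + 1) ×ˢ Ico c₂ (c₂ + 1), g z =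
      ∑ k ∈ Finset.range N₁, ∑ l ∈ Finset.range N₂,
        ∫ z in (Ico (c₁ + (k : ℝ) * h₁) (c₁ + ((k : ℝ) + 1) * h₁)) ×ˢ
          (Ico (c₂ + (l : ℝ) * h₂) (c₂ + ((l : ℝ) + 1) * h₂)), g z := by
  have hp₁ : 0 < h₁ := by rw [hh₁]; positivity
  have hp₂ : 0 < h₂ := by rw [hh₂]; positivity
  set s : ℕ × ℕ → Set (ℝ × ℝ) := fun p =>
    (Ico (c₁ + (p.1 : ℝ) * h₁) (c₁ + ((p.1 : ℝ) + 1) * h₁)) ×ˢ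
      (Ico (c₂ + (p.2 : ℝ) * h₂) (c₂ + ((p.2 : ℝ) + 1) * h₂)) with hs
  have hunion : ⋃ p ∈ Finset.range N₁ ×ˢ Finset.range N₂, s p
      = Ico c₁ (c₁ + 1) ×ˢ Ico c₂ (c₂ + 1) := by
    have hx := oneD_union N₁ hN₁ h₁ hh₁ c₁
    have hy := oneD_union N₂ hN₂ h₂ hh₂ c₂
    ext z
    simp only [Set.mem_iUnion, Finset.mem_product, exists_prop, Set.mem_prod, hs]
    constructor
    · rintro ⟨⟨k, l⟩, ⟨hk, hl⟩, hz1, hz2⟩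
      constructor
      · rw [← hx]; simp only [Set.mem_iUnion, exists_prop]; exact ⟨k, hk, hz1⟩
      · rw [← hy]; simp only [Set.mem_iUnion, exists_prop]; exact ⟨l, hl, hz2⟩
    · rintro ⟨hz1, hz2⟩
      rw [← hx] at hz1; rw [← hy] at hz2
      simp only [Set.mem_iUnion, exists_prop] at hz1 hz2
      obtain ⟨k, hk, hk'⟩ := hz1
      obtain ⟨l, hl, hl'⟩ := hz2
      exact ⟨(k, l), ⟨hk, hl⟩, hk', hl'⟩
  rw [← hunion, integral_biUnion_finset]
  · rw [Finset.sum_product]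
  · intro p _
    exact (measurableSet_Ico.prod measurableSet_Ico)
  · intro p _ q _ hpq
    simp only [Function.onFun, hs]
    rw [Set.disjoint_left]
    rintro z ⟨hz1, hz2⟩ ⟨hw1, hw2⟩
    by_cases hk : p.1 = q.1
    · have hl : p.2 ≠ q.2 := fun h => hpq (Prod.ext hk h)
      exact (Set.disjoint_left.1 (oneD_disj h₂ hp₂ c₂ hl)) hz2 hw2
    · exact (Set.disjoint_left.1 (oneD_disj h₁ hp₁ c₁ hk)) hz1 hw1
  · intro p _
    exact hg p.1 p.2

lemma int_hat_inc (a h : ℝ) (hp : 0 < h) : (∫ x in Ico a (a + h), (x - a) / h) = h / 2 := by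
  rw [setIntegral_congr_set Ico_ae_eq_Ioc, ← intervalIntegral.integral_of_le (by linarith : a ≤ a + h),
    intervalIntegral.integral_div]
  have : (∫ x in a..a + h, (x - a)) = h ^ 2 / 2 := by
    have := intervalIntegral.integral_comp_sub_right (a := a) (b := a + h) (fun x => x) a
    rw [this]
    simp [integral_id]
  rw [this]; field_simp

lemma int_hat_dec (a h : ℝ) (hp : 0 < h) : (∫ x in Ico a (a + h), (a + h - x) / h) = h / 2 := by
  rw [setIntegral_congr_set Ico_ae_eq_Ioc, ← intervalIntegral.integral_of_le (by linarith : a ≤ a + h),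
    intervalIntegral.integral_div]
  have : (∫ x in a..a + h, (a + h - x)) = h ^ 2 / 2 := by
    have h1 : (∫ x in a..a + h, (a + h - x)) = ∫ x in a..a+h, ((a+h) - x) := rfl
    rw [h1]
    have := intervalIntegral.integral_comp_sub_left (a := a) (b := a + h) (fun x => x) (a + h)
    rw [this]
    simp [integral_id]
  rw [this]; field_simp

lemma locint_on_IcoProd {g : ℝ × ℝ → ℝ} (hg : LocallyIntegrable g volume) (a b a' b' : ℝ) :
    IntegrableOn g (Ico a b ×ˢ Ico a' b') volume :=
  (hg.integrableOn_isCompact (isCompact_Icc.prod isCompact_Icc)).mono_set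
    (Set.prod_mono Ico_subset_Icc_self Ico_subset_Icc_self)

lemma translate_Ico (g : ℝ × ℝ → ℝ) (v : ℝ × ℝ) (a b a' b' : ℝ) :
    (∫ x in Ico a b ×ˢ Ico a' b', g (v + x)) =
      ∫ x in Ico (a + v.1) (b + v.1) ×ˢ Ico (a' + v.2) (b' + v.2), g x := by
  have hpre : (fun x : ℝ × ℝ => v + x) ⁻¹'
      (Ico (a + v.1) (b + v.1) ×ˢ Ico (a' + v.2) (b' + v.2)) = Ico a b ×ˢ Ico a' b' := by
    ext ⟨x, y⟩
    simp only [Set.mem_preimage, Set.mem_prod, Set.mem_Ico, Prod.fst_add, Prod.snd_add]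
    constructor
    · rintro ⟨⟨p1, p2⟩, p3, p4⟩; exact ⟨⟨by linarith, by linarith⟩, by linarith, by linarith⟩
    · rintro ⟨⟨p1, p2⟩, p3, p4⟩; exact ⟨⟨by linarith, by linarith⟩, by linarith, by linarith⟩
  rw [← hpre]
  exact (measurePreserving_add_left volume v).setIntegral_preimage_emb
    (measurableEmbedding_addLeft v) g _

lemma translate_Icc (g : ℝ × ℝ → ℝ) (v : ℝ × ℝ) (a b a' b' : ℝ) :
    (∫ x in Icc a b ×ˢ Icc a' b', g (v + x)) =
      ∫ x in Icc (a + v.1) (b + v.1) ×ˢ Icc (a' + v.2) (b' + v.2), g x := by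
  have hpre : (fun x : ℝ × ℝ => v + x) ⁻¹'
      (Icc (a + v.1) (b + v.1) ×ˢ Icc (a' + v.2) (b' + v.2)) = Icc a b ×ˢ Icc a' b' := by
    ext ⟨x, y⟩
    simp only [Set.mem_preimage, Set.mem_prod, Set.mem_Icc, Prod.fst_add, Prod.snd_add]
    constructor
    · rintro ⟨⟨p1, p2⟩, p3, p4⟩; exact ⟨⟨by linarith, by linarith⟩, by linarith, by linarith⟩
    · rintro ⟨⟨p1, p2⟩, p3, p4⟩; exact ⟨⟨by linarith, by linarith⟩, by linarith, by linarith⟩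
  rw [← hpre]
  exact (measurePreserving_add_left volume v).setIntegral_preimage_emb
    (measurableEmbedding_addLeft v) g _

lemma split_left (g : ℝ × ℝ → ℝ) (a m b : ℝ) (h1 : a ≤ m) (h2 : m ≤ b) (t : Set ℝ)
    (ht : MeasurableSet t) (hi : IntegrableOn g (Ico a b ×ˢ t) volume) :
    ∫ z in Ico a b ×ˢ t, g z =
      (∫ z in Ico a m ×ˢ t, g z) + ∫ z in Ico m b ×ˢ t, g z := by
  rw [← Ico_union_Ico_eq_Ico h1 h2, Set.union_prod]
  rw [setIntegral_union ?_ (measurableSet_Ico.prod ht)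
      (hi.mono_set (Set.prod_mono (Ico_subset_Ico le_rfl h2) le_rfl))
      (hi.mono_set (Set.prod_mono (Ico_subset_Ico h1 le_rfl) le_rfl))]
  rw [Set.disjoint_left]
  rintro ⟨x, y⟩ ⟨hx, _⟩ ⟨hx', _⟩
  exact (Set.disjoint_left.1 ((Set.Ico_disjoint_Ico).2 (le_trans (min_le_left _ _) (le_max_right _ _)))) hx hx'

lemma split_right (g : ℝ × ℝ → ℝ) (a m b : ℝ) (h1 : a ≤ m) (h2 : m ≤ b) (t : Set ℝ)
    (ht : MeasurableSet t) (hi : IntegrableOn g (t ×ˢ Ico a b) volume) :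
    ∫ z in t ×ˢ Ico a b, g z =
      (∫ z in t ×ˢ Ico a m, g z) + ∫ z in t ×ˢ Ico m b, g z := by
  rw [← Ico_union_Ico_eq_Ico h1 h2, Set.prod_union]
  rw [setIntegral_union ?_ (ht.prod measurableSet_Ico)
      (hi.mono_set (Set.prod_mono le_rfl (Ico_subset_Ico le_rfl h2)))
      (hi.mono_set (Set.prod_mono le_rfl (Ico_subset_Ico h1 le_rfl)))]
  rw [Set.disjoint_left]
  rintro ⟨x, y⟩ ⟨_, hy⟩ ⟨_, hy'⟩
  exact (Set.disjoint_left.1 ((Set.Ico_disjoint_Ico).2 (le_trans (min_le_left _ _) (le_max_right _ _)))) hy hy'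

lemma periodic_square (g : ℝ × ℝ → ℝ) (hgloc : LocallyIntegrable g volume)
    (hg1 : ∀ z : ℝ × ℝ, g (z.1 + 1, z.2) = g z) (hg2 : ∀ z : ℝ × ℝ, g (z.1, z.2 + 1) = g z)
    (c₁ c₂ : ℝ) (hc₁ : -1 ≤ c₁) (hc₁' : c₁ ≤ 0) (hc₂ : -1 ≤ c₂) (hc₂' : c₂ ≤ 0) :
    (∫ z in Ico c₁ (c₁ + 1) ×ˢ Ico c₂ (c₂ + 1), g z) = ∫ z in Ico 0 1 ×ˢ Ico 0 1, g z := by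
  have hv10 : ∀ x : ℝ × ℝ, g ((1, 0) + x) = g x := by
    intro x
    have := hg1 (x.1, x.2)
    simpa [Prod.add_def, add_comm] using this
  have hv01 : ∀ x : ℝ × ℝ, g ((0, 1) + x) = g x := by
    intro x
    have := hg2 (x.1, x.2)
    simpa [Prod.add_def, add_comm] using this
  have hv11 : ∀ x : ℝ × ℝ, g ((1, 1) + x) = g x := by
    intro x
    have h1 := hg1 (x.1, x.2 + 1)
    have h2 := hg2 (x.1, x.2)
    simp only [Prod.add_def]
    calc g (1 + x.1, 1 + x.2) = g (x.1 + 1, x.2 + 1) := by ring_nf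
      _ = g (x.1, x.2 + 1) := h1
      _ = g x := h2
  -- split the shifted square into four pieces
  have hsl := split_left g c₁ 0 (c₁ + 1) hc₁' (by linarith) (Ico c₂ (c₂ + 1)) measurableSet_Ico
    (locint_on_IcoProd hgloc _ _ _ _)
  have hsr1 := split_right g c₂ 0 (c₂ + 1) hc₂' (by linarith) (Ico c₁ 0) measurableSet_Ico
    (locint_on_IcoProd hgloc _ _ _ _)
  have hsr2 := split_right g c₂ 0 (c₂ + 1) hc₂' (by linarith) (Ico 0 (c₁ + 1)) measurableSet_Ico
    (locint_on_IcoProd hgloc _ _ _ _)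
  -- split the unit square into the corresponding four pieces
  have hul := split_left g 0 (c₁ + 1) 1 (by linarith) (by linarith) (Ico 0 1) measurableSet_Ico
    (locint_on_IcoProd hgloc _ _ _ _)
  have hur1 := split_right g 0 (c₂ + 1) 1 (by linarith) (by linarith) (Ico 0 (c₁ + 1))
    measurableSet_Ico (locint_on_IcoProd hgloc _ _ _ _)
  have hur2 := split_right g 0 (c₂ + 1) 1 (by linarith) (by linarith) (Ico (c₁ + 1) 1)
    measurableSet_Ico (locint_on_IcoProd hgloc _ _ _ _)
  -- translate the three "negative" pieces
  have t11 : (∫ z in Ico c₁ 0 ×ˢ Ico c₂ 0, g z)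
      = ∫ z in Ico (c₁ + 1) 1 ×ˢ Ico (c₂ + 1) 1, g z := by
    have := translate_Ico g (1, 1) c₁ 0 c₂ 0
    simp only [hv11] at this
    simpa using this
  have t10 : (∫ z in Ico c₁ 0 ×ˢ Ico 0 (c₂ + 1), g z)
      = ∫ z in Ico (c₁ + 1) 1 ×ˢ Ico 0 (c₂ + 1), g z := by
    have := translate_Ico g (1, 0) c₁ 0 0 (c₂ + 1)
    simp only [hv10] at this
    simpa using this
  have t01 : (∫ z in Ico 0 (c₁ + 1) ×ˢ Ico c₂ 0, g z)
      = ∫ z in Ico 0 (c₁ + 1) ×ˢ Ico (c₂ + 1) 1, g z := by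
    have := translate_Ico g (0, 1) 0 (c₁ + 1) c₂ 0
    simp only [hv01] at this
    simpa using this
  rw [hsl, hsr1, hsr2, hul, hur1, hur2, t11, t10, t01]
  ring

lemma cont_int {F : ℝ × ℝ → ℝ} (hF : Continuous F) (a b a' b' : ℝ) :
    IntegrableOn F (Ico a b ×ˢ Ico a' b') volume :=
  locint_on_IcoProd hF.locallyIntegrable a b a' b'

lemma cell_bound (h₁ h₂ : ℝ) (hp₁ : 0 < h₁) (hp₂ : 0 < h₂) (f : ℝ × ℝ → ℝ) (hf : Continuous f)
    (x0 y0 : ℝ)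
    (hbil : ∃ a b c d : ℝ, ∀ z ∈ Icc x0 (x0 + h₁) ×ˢ Icc y0 (y0 + h₂),
      f z = a + b * z.1 + c * z.2 + d * (z.1 * z.2)) :
    (∫ z in Ico x0 (x0 + h₁) ×ˢ Ico y0 (y0 + h₂), |f z|) ≤
      h₁ * h₂ / 4 * (|f (x0, y0)| + |f (x0 + h₁, y0)| + |f (x0, y0 + h₂)|
        + |f (x0 + h₁, y0 + h₂)|) := by
  obtain ⟨a, b, c, d, hpoly⟩ := hbil
  set V00 := f (x0, y0)
  set V10 := f (x0 + h₁, y0)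
  set V01 := f (x0, y0 + h₂)
  set V11 := f (x0 + h₁, y0 + h₂)
  set G : ℝ × ℝ → ℝ := fun z =>
    ((x0 + h₁ - z.1) / h₁ * ((y0 + h₂ - z.2) / h₂)) * |V00|
      + ((z.1 - x0) / h₁ * ((y0 + h₂ - z.2) / h₂)) * |V10|
      + ((x0 + h₁ - z.1) / h₁ * ((z.2 - y0) / h₂)) * |V01|
      + ((z.1 - x0) / h₁ * ((z.2 - y0) / h₂)) * |V11| with hG
  have hc00 : V00 = a + b * x0 + c * y0 + d * (x0 * y0) :=
    hpoly (x0, y0) (by refine ⟨⟨?_, ?_⟩, ?_, ?_⟩ <;> simp <;> linarith)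
  have hc10 : V10 = a + b * (x0 + h₁) + c * y0 + d * ((x0 + h₁) * y0) :=
    hpoly (x0 + h₁, y0) (by refine ⟨⟨?_, ?_⟩, ?_, ?_⟩ <;> simp <;> linarith)
  have hc01 : V01 = a + b * x0 + c * (y0 + h₂) + d * (x0 * (y0 + h₂)) :=
    hpoly (x0, y0 + h₂) (by refine ⟨⟨?_, ?_⟩, ?_, ?_⟩ <;> simp <;> linarith)
  have hc11 : V11 = a + b * (x0 + h₁) + c * (y0 + h₂) + d * ((x0 + h₁) * (y0 + h₂)) :=
    hpoly (x0 + h₁, y0 + h₂) (by refine ⟨⟨?_, ?_⟩, ?_, ?_⟩ <;> simp <;> linarith)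
  have key : ∀ z ∈ Ico x0 (x0 + h₁) ×ˢ Ico y0 (y0 + h₂), |f z| ≤ G z := by
    rintro ⟨x, y⟩ ⟨⟨hx1, hx2⟩, ⟨hy1, hy2⟩⟩
    have hmem : (x, y) ∈ Icc x0 (x0 + h₁) ×ˢ Icc y0 (y0 + h₂) :=
      ⟨⟨hx1, hx2.le⟩, ⟨hy1, hy2.le⟩⟩
    have hrep : f (x, y) =
        ((x0 + h₁ - x) / h₁ * ((y0 + h₂ - y) / h₂)) * V00
          + ((x - x0) / h₁ * ((y0 + h₂ - y) / h₂)) * V10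
          + ((x0 + h₁ - x) / h₁ * ((y - y0) / h₂)) * V01
          + ((x - x0) / h₁ * ((y - y0) / h₂)) * V11 := by
      rw [hpoly (x, y) hmem, hc00, hc10, hc01, hc11]
      field_simp
      ring
    have w1 : (0:ℝ) ≤ (x0 + h₁ - x) / h₁ := div_nonneg (by linarith) hp₁.le
    have w2 : (0:ℝ) ≤ (x - x0) / h₁ := div_nonneg (by linarith) hp₁.le
    have w3 : (0:ℝ) ≤ (y0 + h₂ - y) / h₂ := div_nonneg (by linarith) hp₂.le
    have w4 : (0:ℝ) ≤ (y - y0) / h₂ := div_nonneg (by linarith) hp₂.le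
    rw [hrep]
    have habs : ∀ u v V : ℝ, 0 ≤ u → 0 ≤ v → |u * v * V| = u * v * |V| := by
      intro u v V hu hv
      rw [abs_mul, abs_of_nonneg (mul_nonneg hu hv)]
    set t1 := (x0 + h₁ - x) / h₁ * ((y0 + h₂ - y) / h₂) * V00 with ht1
    set t2 := (x - x0) / h₁ * ((y0 + h₂ - y) / h₂) * V10 with ht2
    set t3 := (x0 + h₁ - x) / h₁ * ((y - y0) / h₂) * V01 with ht3
    set t4 := (x - x0) / h₁ * ((y - y0) / h₂) * V11 with ht4
    have habs4 : |t1 + t2 + t3 + t4| ≤ |t1| + |t2| + |t3| + |t4| :=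
      (abs_add_le _ _).trans (add_le_add_left (abs_add_three t1 t2 t3) _)
    refine habs4.trans (le_of_eq ?_)
    rw [ht1, ht2, ht3, ht4, habs _ _ _ w1 w3, habs _ _ _ w2 w3, habs _ _ _ w1 w4,
      habs _ _ _ w2 w4]
  have hGcont : Continuous G := by
    apply Continuous.add
    apply Continuous.add
    apply Continuous.add
    all_goals fun_prop
  have hmono := setIntegral_mono_on (cont_int hf.abs x0 (x0 + h₁) y0 (y0 + h₂))
    (cont_int hGcont x0 (x0 + h₁) y0 (y0 + h₂))
    (measurableSet_Ico.prod measurableSet_Ico) key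
  refine hmono.trans (le_of_eq ?_)
  have hsep : ∀ φ ψ : ℝ → ℝ,
      (∫ z in Ico x0 (x0 + h₁) ×ˢ Ico y0 (y0 + h₂), φ z.1 * ψ z.2) =
        (∫ x in Ico x0 (x0 + h₁), φ x) * ∫ y in Ico y0 (y0 + h₂), ψ y := by
    intro φ ψ
    rw [Measure.volume_eq_prod]
    exact setIntegral_prod_mul φ ψ _ _
  have hT1 : IntegrableOn (fun z : ℝ × ℝ =>
      (x0 + h₁ - z.1) / h₁ * ((y0 + h₂ - z.2) / h₂) * |V00|) _ volume :=
    cont_int (by fun_prop) x0 (x0 + h₁) y0 (y0 + h₂)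
  have hT2 : IntegrableOn (fun z : ℝ × ℝ =>
      (z.1 - x0) / h₁ * ((y0 + h₂ - z.2) / h₂) * |V10|) _ volume :=
    cont_int (by fun_prop) x0 (x0 + h₁) y0 (y0 + h₂)
  have hT3 : IntegrableOn (fun z : ℝ × ℝ =>
      (x0 + h₁ - z.1) / h₁ * ((z.2 - y0) / h₂) * |V01|) _ volume :=
    cont_int (by fun_prop) x0 (x0 + h₁) y0 (y0 + h₂)
  have hT4 : IntegrableOn (fun z : ℝ × ℝ =>
      (z.1 - x0) / h₁ * ((z.2 - y0) / h₂) * |V11|) _ volume :=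
    cont_int (by fun_prop) x0 (x0 + h₁) y0 (y0 + h₂)
  have A12 : (∫ z in Ico x0 (x0 + h₁) ×ˢ Ico y0 (y0 + h₂),
        ((x0 + h₁ - z.1) / h₁ * ((y0 + h₂ - z.2) / h₂) * |V00|
          + (z.1 - x0) / h₁ * ((y0 + h₂ - z.2) / h₂) * |V10|)) =
      (∫ z in Ico x0 (x0 + h₁) ×ˢ Ico y0 (y0 + h₂),
        (x0 + h₁ - z.1) / h₁ * ((y0 + h₂ - z.2) / h₂) * |V00|)
      + ∫ z in Ico x0 (x0 + h₁) ×ˢ Ico y0 (y0 + h₂),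
        (z.1 - x0) / h₁ * ((y0 + h₂ - z.2) / h₂) * |V10| := integral_add hT1 hT2
  have A34 : (∫ z in Ico x0 (x0 + h₁) ×ˢ Ico y0 (y0 + h₂),
        ((x0 + h₁ - z.1) / h₁ * ((z.2 - y0) / h₂) * |V01|
          + (z.1 - x0) / h₁ * ((z.2 - y0) / h₂) * |V11|)) =
      (∫ z in Ico x0 (x0 + h₁) ×ˢ Ico y0 (y0 + h₂),
        (x0 + h₁ - z.1) / h₁ * ((z.2 - y0) / h₂) * |V01|)
      + ∫ z in Ico x0 (x0 + h₁) ×ˢ Ico y0 (y0 + h₂),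
        (z.1 - x0) / h₁ * ((z.2 - y0) / h₂) * |V11| := integral_add hT3 hT4
  have A : (∫ z in Ico x0 (x0 + h₁) ×ˢ Ico y0 (y0 + h₂),
        ((x0 + h₁ - z.1) / h₁ * ((y0 + h₂ - z.2) / h₂) * |V00|
          + (z.1 - x0) / h₁ * ((y0 + h₂ - z.2) / h₂) * |V10|
          + ((x0 + h₁ - z.1) / h₁ * ((z.2 - y0) / h₂) * |V01|
          + (z.1 - x0) / h₁ * ((z.2 - y0) / h₂) * |V11|))) =
      (∫ z in Ico x0 (x0 + h₁) ×ˢ Ico y0 (y0 + h₂),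
        ((x0 + h₁ - z.1) / h₁ * ((y0 + h₂ - z.2) / h₂) * |V00|
          + (z.1 - x0) / h₁ * ((y0 + h₂ - z.2) / h₂) * |V10|))
      + ∫ z in Ico x0 (x0 + h₁) ×ˢ Ico y0 (y0 + h₂),
        ((x0 + h₁ - z.1) / h₁ * ((z.2 - y0) / h₂) * |V01|
          + (z.1 - x0) / h₁ * ((z.2 - y0) / h₂) * |V11|) :=
    integral_add (hT1.add hT2) (hT3.add hT4)
  have e1 := hsep (fun x => (x0 + h₁ - x) / h₁) (fun y => (y0 + h₂ - y) / h₂)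
  have e2 := hsep (fun x => (x - x0) / h₁) (fun y => (y0 + h₂ - y) / h₂)
  have e3 := hsep (fun x => (x0 + h₁ - x) / h₁) (fun y => (y - y0) / h₂)
  have e4 := hsep (fun x => (x - x0) / h₁) (fun y => (y - y0) / h₂)
  rw [int_hat_dec x0 h₁ hp₁, int_hat_dec y0 h₂ hp₂] at e1
  rw [int_hat_inc x0 h₁ hp₁, int_hat_dec y0 h₂ hp₂] at e2
  rw [int_hat_dec x0 h₁ hp₁, int_hat_inc y0 h₂ hp₂] at e3
  rw [int_hat_inc x0 h₁ hp₁, int_hat_inc y0 h₂ hp₂] at e4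
  rw [hG]
  simp only []
  calc (∫ z in Ico x0 (x0 + h₁) ×ˢ Ico y0 (y0 + h₂),
        ((x0 + h₁ - z.1) / h₁ * ((y0 + h₂ - z.2) / h₂) * |V00|
          + (z.1 - x0) / h₁ * ((y0 + h₂ - z.2) / h₂) * |V10|
          + (x0 + h₁ - z.1) / h₁ * ((z.2 - y0) / h₂) * |V01|
          + (z.1 - x0) / h₁ * ((z.2 - y0) / h₂) * |V11|)) =
      ∫ z in Ico x0 (x0 + h₁) ×ˢ Ico y0 (y0 + h₂),
        ((x0 + h₁ - z.1) / h₁ * ((y0 + h₂ - z.2) / h₂) * |V00|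
          + (z.1 - x0) / h₁ * ((y0 + h₂ - z.2) / h₂) * |V10|
          + ((x0 + h₁ - z.1) / h₁ * ((z.2 - y0) / h₂) * |V01|
          + (z.1 - x0) / h₁ * ((z.2 - y0) / h₂) * |V11|)) :=
      integral_congr_ae (Filter.Eventually.of_forall fun z => by ring)
    _ = _ := by
      rw [A, A12, A34, integral_mul_const, integral_mul_const, integral_mul_const,
        integral_mul_const, e1, e2, e3, e4]
      ring

lemma sum_shift (N : ℕ) (A : ℕ → ℝ) (hA : A N = A 0) :
    ∑ k ∈ Finset.range N, A (k + 1) = ∑ k ∈ Finset.range N, A k := by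
  have h1 := Finset.sum_range_succ' A N
  have h2 := Finset.sum_range_succ A N
  rw [h2] at h1
  linarith

lemma nodal_bound (h₁ h₂ : ℝ) (hp₁ : 0 < h₁) (hp₂ : 0 < h₂) (w : ℝ × ℝ → ℝ)
    (k l : ℤ) :
    h₁ * h₂ * |nodalAvg h₁ h₂ w k l| ≤
      ∫ z in Ico (-(h₁ / 2) + (k : ℝ) * h₁) (-(h₁ / 2) + ((k : ℝ) + 1) * h₁) ×ˢ
        Ico (-(h₂ / 2) + (l : ℝ) * h₂) (-(h₂ / 2) + ((l : ℝ) + 1) * h₂), |w z| := by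
  have habs : h₁ * h₂ * |nodalAvg h₁ h₂ w k l| =
      |∫ ζ in Qset h₁ h₂, w ((k : ℝ) * h₁ + ζ.1, (l : ℝ) * h₂ + ζ.2)| := by
    unfold nodalAvg
    rw [abs_mul, abs_inv, abs_of_nonneg (by positivity : (0:ℝ) ≤ h₁ * h₂)]
    field_simp
  rw [habs]
  have hstep1 : |∫ ζ in Qset h₁ h₂, w ((k : ℝ) * h₁ + ζ.1, (l : ℝ) * h₂ + ζ.2)| ≤
      ∫ ζ in Qset h₁ h₂, |w ((k : ℝ) * h₁ + ζ.1, (l : ℝ) * h₂ + ζ.2)| := by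
    simpa [Real.norm_eq_abs] using
      norm_integral_le_integral_norm (μ := volume.restrict (Qset h₁ h₂))
        (f := fun ζ : ℝ × ℝ => w ((k : ℝ) * h₁ + ζ.1, (l : ℝ) * h₂ + ζ.2))
  refine hstep1.trans (le_of_eq ?_)
  have hshift : ∀ ζ : ℝ × ℝ, |w ((k : ℝ) * h₁ + ζ.1, (l : ℝ) * h₂ + ζ.2)| =
      (fun x => |w x|) (((k : ℝ) * h₁, (l : ℝ) * h₂) + ζ) := by
    intro ζ; rfl
  calc (∫ ζ in Qset h₁ h₂, |w ((k : ℝ) * h₁ + ζ.1, (l : ℝ) * h₂ + ζ.2)|)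
      = ∫ ζ in Icc (-(h₁ / 2)) (h₁ / 2) ×ˢ Icc (-(h₂ / 2)) (h₂ / 2),
          (fun x => |w x|) (((k : ℝ) * h₁, (l : ℝ) * h₂) + ζ) := by
        apply integral_congr_ae
        exact Filter.Eventually.of_forall fun ζ => hshift ζ
    _ = ∫ x in Icc (-(h₁ / 2) + (k : ℝ) * h₁) (h₁ / 2 + (k : ℝ) * h₁) ×ˢ
          Icc (-(h₂ / 2) + (l : ℝ) * h₂) (h₂ / 2 + (l : ℝ) * h₂), |w x| :=
        translate_Icc (fun x => |w x|) ((k : ℝ) * h₁, (l : ℝ) * h₂) _ _ _ _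
    _ = ∫ x in Ico (-(h₁ / 2) + (k : ℝ) * h₁) (h₁ / 2 + (k : ℝ) * h₁) ×ˢ
          Ico (-(h₂ / 2) + (l : ℝ) * h₂) (h₂ / 2 + (l : ℝ) * h₂), |w x| := by
        apply setIntegral_congr_set
        have h := MeasureTheory.Measure.set_prod_ae_eq (μ := (volume : Measure ℝ))
          (ν := (volume : Measure ℝ))
          (Ico_ae_eq_Icc (a := -(h₁ / 2) + (k : ℝ) * h₁) (b := h₁ / 2 + (k : ℝ) * h₁)).symm
          (Ico_ae_eq_Icc (a := -(h₂ / 2) + (l : ℝ) * h₂) (b := h₂ / 2 + (l : ℝ) * h₂)).symm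
        rw [← Measure.volume_eq_prod] at h
        exact h
    _ = _ := by
        congr 2 <;> ring

/-- L¹-stability of `Π_h`, periodic case. -/
theorem stmt0 (N₁ N₂ : ℕ) (hN₁ : 0 < N₁) (hN₂ : 0 < N₂) (h₁ h₂ : ℝ)
    (hh₁ : h₁ = 1 / N₁) (hh₂ : h₂ = 1 / N₂)
    (w : ℝ × ℝ → ℝ) (hwloc : LocallyIntegrable w volume) (hwper : Periodic2 w)
    (hwint : IntegrableOn w Omg volume)
    (Pw : ℝ × ℝ → ℝ) (hPw : IsInterpolant h₁ h₂ w Pw) :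
    (∫ z in Omg, |Pw z|) ≤ ∫ z in Omg, |w z| := by
  obtain ⟨hPcont, _hPper, hPbil, hPnode⟩ := hPw
  have hN₁R : (0:ℝ) < N₁ := by exact_mod_cast hN₁
  have hN₂R : (0:ℝ) < N₂ := by exact_mod_cast hN₂
  have hp₁ : 0 < h₁ := by rw [hh₁]; positivity
  have hp₂ : 0 < h₂ := by rw [hh₂]; positivity
  have hN₁h : (N₁:ℝ) * h₁ = 1 := by rw [hh₁]; field_simp
  have hN₂h : (N₂:ℝ) * h₂ = 1 := by rw [hh₂]; field_simp
  have h₁le : h₁ ≤ 1 := by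
    rw [hh₁, div_le_one hN₁R]; exact_mod_cast hN₁
  have h₂le : h₂ ≤ 1 := by
    rw [hh₂, div_le_one hN₂R]; exact_mod_cast hN₂
  set W : ℤ → ℤ → ℝ := fun k l => nodalAvg h₁ h₂ w k l with hW
  have hwabs_loc : LocallyIntegrable (fun z : ℝ × ℝ => |w z|) volume := by
    rw [MeasureTheory.locallyIntegrable_iff]
    intro K hK
    simpa [Real.norm_eq_abs, IntegrableOn] using (hwloc.integrableOn_isCompact hK).norm
  -- periodicity of the nodal values
  have hWper1 : ∀ k l : ℤ, W (k + N₁) l = W k l := by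
    intro k l
    show nodalAvg h₁ h₂ w (k + N₁) l = nodalAvg h₁ h₂ w k l
    unfold nodalAvg
    congr 1
    apply integral_congr_ae
    refine Filter.Eventually.of_forall fun ζ => ?_
    have harg : ((k + (N₁:ℤ) : ℤ) : ℝ) * h₁ + ζ.1 = ((k:ℝ) * h₁ + ζ.1) + 1 := by
      push_cast
      linear_combination hN₁h
    simp only [harg]
    exact hwper.1 ((k:ℝ) * h₁ + ζ.1, (l:ℝ) * h₂ + ζ.2)
  have hWper2 : ∀ k l : ℤ, W k (l + N₂) = W k l := by
    intro k l
    show nodalAvg h₁ h₂ w k (l + N₂) = nodalAvg h₁ h₂ w k l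
    unfold nodalAvg
    congr 1
    apply integral_congr_ae
    refine Filter.Eventually.of_forall fun ζ => ?_
    have harg : ((l + (N₂:ℤ) : ℤ) : ℝ) * h₂ + ζ.2 = ((l:ℝ) * h₂ + ζ.2) + 1 := by
      push_cast
      linear_combination hN₂h
    simp only [harg]
    exact hwper.2 ((k:ℝ) * h₁ + ζ.1, (l:ℝ) * h₂ + ζ.2)
  -- per-cell estimate
  have hcellest : ∀ k l : ℕ,
      (∫ z in Ico ((k:ℝ) * h₁) (((k:ℝ) + 1) * h₁) ×ˢ Ico ((l:ℝ) * h₂) (((l:ℝ) + 1) * h₂),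
        |Pw z|) ≤ h₁ * h₂ / 4 * (|W (k:ℤ) (l:ℤ)| + |W ((k:ℤ) + 1) (l:ℤ)|
          + |W (k:ℤ) ((l:ℤ) + 1)| + |W ((k:ℤ) + 1) ((l:ℤ) + 1)|) := by
    intro k l
    have hbil : ∃ a b c d : ℝ, ∀ z ∈ Icc ((k:ℝ) * h₁) ((k:ℝ) * h₁ + h₁) ×ˢ
        Icc ((l:ℝ) * h₂) ((l:ℝ) * h₂ + h₂),
        Pw z = a + b * z.1 + c * z.2 + d * (z.1 * z.2) := by
      obtain ⟨a, b, c, d, hpoly⟩ := hPbil (k:ℤ) (l:ℤ)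
      refine ⟨a, b, c, d, fun z hz => hpoly z ?_⟩
      have hcell : cell h₁ h₂ (k:ℤ) (l:ℤ) = Icc ((k:ℝ) * h₁) ((k:ℝ) * h₁ + h₁) ×ˢ
          Icc ((l:ℝ) * h₂) ((l:ℝ) * h₂ + h₂) := by
        unfold cell
        push_cast
        rw [show ((k:ℝ) + 1) * h₁ = (k:ℝ) * h₁ + h₁ by ring,
          show ((l:ℝ) + 1) * h₂ = (l:ℝ) * h₂ + h₂ by ring]
      rw [hcell]
      exact hz
    have hcb := cell_bound h₁ h₂ hp₁ hp₂ Pw hPcont ((k:ℝ) * h₁) ((l:ℝ) * h₂) hbil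
    have c00 : Pw ((k:ℝ) * h₁, (l:ℝ) * h₂) = W (k:ℤ) (l:ℤ) := by
      have := hPnode (k:ℤ) (l:ℤ)
      push_cast at this
      exact this
    have c10 : Pw ((k:ℝ) * h₁ + h₁, (l:ℝ) * h₂) = W ((k:ℤ) + 1) (l:ℤ) := by
      have := hPnode ((k:ℤ) + 1) (l:ℤ)
      push_cast at this
      rw [show (k:ℝ) * h₁ + h₁ = ((k:ℝ) + 1) * h₁ by ring]
      exact this
    have c01 : Pw ((k:ℝ) * h₁, (l:ℝ) * h₂ + h₂) = W (k:ℤ) ((l:ℤ) + 1) := by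
      have := hPnode (k:ℤ) ((l:ℤ) + 1)
      push_cast at this
      rw [show (l:ℝ) * h₂ + h₂ = ((l:ℝ) + 1) * h₂ by ring]
      exact this
    have c11 : Pw ((k:ℝ) * h₁ + h₁, (l:ℝ) * h₂ + h₂) = W ((k:ℤ) + 1) ((l:ℤ) + 1) := by
      have := hPnode ((k:ℤ) + 1) ((l:ℤ) + 1)
      push_cast at this
      rw [show (k:ℝ) * h₁ + h₁ = ((k:ℝ) + 1) * h₁ by ring,
        show (l:ℝ) * h₂ + h₂ = ((l:ℝ) + 1) * h₂ by ring]
      exact this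
    rw [c00, c10, c01, c11] at hcb
    rw [show ((k:ℝ) + 1) * h₁ = (k:ℝ) * h₁ + h₁ by ring,
      show ((l:ℝ) + 1) * h₂ = (l:ℝ) * h₂ + h₂ by ring]
    exact hcb
  -- total nodal sum
  set S : ℝ := ∑ k ∈ Finset.range N₁, ∑ l ∈ Finset.range N₂, |W (k:ℤ) (l:ℤ)| with hS
  have hNW1 : ∀ l : ℤ, W (N₁:ℤ) l = W 0 l := by
    intro l
    have := hWper1 0 l
    rwa [zero_add] at this
  have hNW2 : ∀ k : ℤ, W k (N₂:ℤ) = W k 0 := by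
    intro k
    have := hWper2 k 0
    rwa [zero_add] at this
  have hS1 : (∑ k ∈ Finset.range N₁, ∑ l ∈ Finset.range N₂, |W ((k:ℤ) + 1) (l:ℤ)|) = S := by
    have := sum_shift N₁ (fun k => ∑ l ∈ Finset.range N₂, |W (k:ℤ) (l:ℤ)|)
      (by exact Finset.sum_congr rfl fun l _ => by rw [hNW1 (l:ℤ)]; norm_num)
    simpa [Nat.cast_succ] using this
  have hS2 : (∑ k ∈ Finset.range N₁, ∑ l ∈ Finset.range N₂, |W (k:ℤ) ((l:ℤ) + 1)|) = S := by
    refine Finset.sum_congr rfl fun k _ => ?_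
    have := sum_shift N₂ (fun l => |W (k:ℤ) (l:ℤ)|) (by rw [hNW2 (k:ℤ)]; norm_num)
    simpa [Nat.cast_succ] using this
  have hS3 : (∑ k ∈ Finset.range N₁, ∑ l ∈ Finset.range N₂,
      |W ((k:ℤ) + 1) ((l:ℤ) + 1)|) = S := by
    rw [← hS1]
    refine Finset.sum_congr rfl fun k _ => ?_
    have := sum_shift N₂ (fun l => |W ((k:ℤ) + 1) (l:ℤ)|) (by rw [hNW2 ((k:ℤ)+1)]; norm_num)
    simpa [Nat.cast_succ] using this
  -- nodal value bound, ℕ version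
  have hnb : ∀ k l : ℕ, h₁ * h₂ * |W (k:ℤ) (l:ℤ)| ≤
      ∫ z in Ico (-(h₁ / 2) + (k:ℝ) * h₁) (-(h₁ / 2) + ((k:ℝ) + 1) * h₁) ×ˢ
        Ico (-(h₂ / 2) + (l:ℝ) * h₂) (-(h₂ / 2) + ((l:ℝ) + 1) * h₂), |w z| := by
    intro k l
    have := nodal_bound h₁ h₂ hp₁ hp₂ w (k:ℤ) (l:ℤ)
    push_cast at this
    exact this
  calc (∫ z in Omg, |Pw z|)
      = ∑ k ∈ Finset.range N₁, ∑ l ∈ Finset.range N₂,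
          ∫ z in Ico ((k:ℝ) * h₁) (((k:ℝ) + 1) * h₁) ×ˢ
            Ico ((l:ℝ) * h₂) (((l:ℝ) + 1) * h₂), |Pw z| := by
        have h0 := twoD_partition N₁ N₂ hN₁ hN₂ h₁ h₂ hh₁ hh₂ 0 0 (fun z => |Pw z|)
          (fun k l => cont_int hPcont.abs _ _ _ _)
        simpa [Omg] using h0
    _ ≤ ∑ k ∈ Finset.range N₁, ∑ l ∈ Finset.range N₂,
          h₁ * h₂ / 4 * (|W (k:ℤ) (l:ℤ)| + |W ((k:ℤ) + 1) (l:ℤ)|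
            + |W (k:ℤ) ((l:ℤ) + 1)| + |W ((k:ℤ) + 1) ((l:ℤ) + 1)|) :=
        Finset.sum_le_sum fun k _ => Finset.sum_le_sum fun l _ => hcellest k l
    _ = h₁ * h₂ * S := by
        simp_rw [← Finset.mul_sum, Finset.sum_add_distrib]
        rw [hS1, hS2, hS3]
        ring
    _ = ∑ k ∈ Finset.range N₁, ∑ l ∈ Finset.range N₂, h₁ * h₂ * |W (k:ℤ) (l:ℤ)| := by
        rw [hS]
        simp_rw [Finset.mul_sum]
    _ ≤ ∑ k ∈ Finset.range N₁, ∑ l ∈ Finset.range N₂,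
          ∫ z in Ico (-(h₁ / 2) + (k:ℝ) * h₁) (-(h₁ / 2) + ((k:ℝ) + 1) * h₁) ×ˢ
            Ico (-(h₂ / 2) + (l:ℝ) * h₂) (-(h₂ / 2) + ((l:ℝ) + 1) * h₂), |w z| :=
        Finset.sum_le_sum fun k _ => Finset.sum_le_sum fun l _ => hnb k l
    _ = ∫ z in Ico (-(h₁ / 2)) (-(h₁ / 2) + 1) ×ˢ Ico (-(h₂ / 2)) (-(h₂ / 2) + 1), |w z| :=
        (twoD_partition N₁ N₂ hN₁ hN₂ h₁ h₂ hh₁ hh₂ (-(h₁ / 2)) (-(h₂ / 2))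
          (fun z => |w z|) (fun k l => locint_on_IcoProd hwabs_loc _ _ _ _)).symm
    _ = ∫ z in Omg, |w z| := by
        have hper := periodic_square (fun z => |w z|) hwabs_loc
          (fun z => congrArg abs (hwper.1 z)) (fun z => congrArg abs (hwper.2 z))
          (-(h₁ / 2)) (-(h₂ / 2)) (by linarith) (by linarith) (by linarith) (by linarith)
        simpa [Omg] using hper
end
end

section
/- For every 1-periodic essentially bounded function w : ℝ² → ℝ, the interpolant Π_h w satisfies ‖Π_h w‖_{L^∞([0,1)²)} ≤ ‖w‖_{L^∞([0,1)²)}. -/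
open MeasureTheory Set
open scoped ENNReal NNReal

noncomputable section

/-- integer translates leave a periodic function invariant -/
lemma per_int {w : ℝ × ℝ → ℝ} (hw : Periodic2 w) (m n : ℤ) (z : ℝ × ℝ) :
    w (z.1 + m, z.2 + n) = w z := by
  have h1 : ∀ y : ℝ, Function.Periodic (fun x => w (x, y)) 1 := fun y x => hw.1 (x, y)
  have h2 : ∀ x : ℝ, Function.Periodic (fun y => w (x, y)) 1 := fun x y => hw.2 (x, y)
  have e1 : w (z.1 + m, z.2 + n) = w (z.1, z.2 + n) := by
    have := ((h1 (z.2 + n)).int_mul m) z.1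
    simpa using this
  have e2 : w (z.1, z.2 + n) = w (z.1, z.2) := by
    have := ((h2 z.1).int_mul n) z.2
    simpa using this
  rw [e1, e2]

/-- bilinear bound by corner values -/
lemma bilin_bound {a b c d x₀ y₀ hx hy C x y : ℝ}
    (hhx : 0 < hx) (hhy : 0 < hy)
    (P : ℝ → ℝ → ℝ) (hP : ∀ u v, P u v = a + b * u + c * v + d * (u * v))
    (h00 : |P x₀ y₀| ≤ C) (h10 : |P (x₀ + hx) y₀| ≤ C)
    (h01 : |P x₀ (y₀ + hy)| ≤ C) (h11 : |P (x₀ + hx) (y₀ + hy)| ≤ C)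
    (hxm : x ∈ Icc x₀ (x₀ + hx)) (hym : y ∈ Icc y₀ (y₀ + hy)) :
    |P x y| ≤ C := by
  set t := (x - x₀) / hx with htdef
  set s := (y - y₀) / hy with hsdef
  have ht0 : 0 ≤ t := div_nonneg (by linarith [hxm.1]) hhx.le
  have ht1 : t ≤ 1 := by
    rw [htdef, div_le_one hhx]; linarith [hxm.2]
  have hs0 : 0 ≤ s := div_nonneg (by linarith [hym.1]) hhy.le
  have hs1 : s ≤ 1 := by
    rw [hsdef, div_le_one hhy]; linarith [hym.2]
  have hxe : x = x₀ + t * hx := by rw [htdef, div_mul_cancel₀ _ hhx.ne']; ring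
  have hye : y = y₀ + s * hy := by rw [hsdef, div_mul_cancel₀ _ hhy.ne']; ring
  have key : P x y = (1 - t) * (1 - s) * P x₀ y₀ + t * (1 - s) * P (x₀ + hx) y₀
      + (1 - t) * s * P x₀ (y₀ + hy) + t * s * P (x₀ + hx) (y₀ + hy) := by
    simp only [hP]; rw [hxe, hye]; ring
  rw [abs_le] at h00 h10 h01 h11 ⊢
  have c00 : (0:ℝ) ≤ (1 - t) * (1 - s) := by nlinarith
  have c10 : (0:ℝ) ≤ t * (1 - s) := by nlinarith
  have c01 : (0:ℝ) ≤ (1 - t) * s := by nlinarith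
  have c11 : (0:ℝ) ≤ t * s := by nlinarith
  constructor
  · rw [key]
    nlinarith [mul_le_mul_of_nonneg_left h00.1 c00, mul_le_mul_of_nonneg_left h10.1 c10,
      mul_le_mul_of_nonneg_left h01.1 c01, mul_le_mul_of_nonneg_left h11.1 c11]
  · rw [key]
    nlinarith [mul_le_mul_of_nonneg_left h00.2 c00, mul_le_mul_of_nonneg_left h10.2 c10,
      mul_le_mul_of_nonneg_left h01.2 c01, mul_le_mul_of_nonneg_left h11.2 c11]

/-- L^∞-stability of `Π_h`, periodic case. -/
theorem stmt1 (N₁ N₂ : ℕ) (hN₁ : 0 < N₁) (hN₂ : 0 < N₂) (h₁ h₂ : ℝ)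
    (hh₁ : h₁ = 1 / N₁) (hh₂ : h₂ = 1 / N₂)
    (w : ℝ × ℝ → ℝ) (hwloc : LocallyIntegrable w volume) (hwper : Periodic2 w)
    (hwbd : eLpNorm w ⊤ (volume.restrict Omg) < ⊤)
    (Pw : ℝ × ℝ → ℝ) (hPw : IsInterpolant h₁ h₂ w Pw) :
    eLpNorm Pw ⊤ (volume.restrict Omg) ≤ eLpNorm w ⊤ (volume.restrict Omg) := by
  obtain ⟨-, -, hbil, hnod⟩ := hPw
  have hh1 : 0 < h₁ := by rw [hh₁]; positivity
  have hh2 : 0 < h₂ := by rw [hh₂]; positivity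
  set M := eLpNorm w ⊤ (volume.restrict Omg) with hMdef
  have hMne : M ≠ ⊤ := hwbd.ne
  set C := M.toReal with hCdef
  have hOmgMeas : MeasurableSet Omg := measurableSet_Ico.prod measurableSet_Ico
  -- Step 1: a.e. bound on Ω
  have h1 : ∀ᵐ x ∂(volume.restrict Omg), ‖w x‖ ≤ C := by
    filter_upwards [ae_le_eLpNormEssSup (f := w) (μ := volume.restrict Omg)] with x hx
    have hx' : (‖w x‖₊ : ℝ≥0∞) ≤ M := by
      rwa [hMdef, eLpNorm_exponent_top]
    have := ENNReal.toReal_mono hMne hx'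
    simpa using this
  -- Step 2: global a.e. bound
  have hglob : ∀ᵐ x : ℝ × ℝ, ‖w x‖ ≤ C := by
    rw [ae_iff] at h1 ⊢
    set s := {x : ℝ × ℝ | ¬ ‖w x‖ ≤ C} with hsdef
    have hs0 : volume (s ∩ Omg) = 0 := by
      rwa [Measure.restrict_apply' hOmgMeas] at h1
    have hcov : s ⊆ ⋃ p : ℤ × ℤ,
        (fun x : ℝ × ℝ => x + (-(p.1 : ℝ), -(p.2 : ℝ))) ⁻¹' (s ∩ Omg) := by
      intro x hx
      refine mem_iUnion.2 ⟨(⌊x.1⌋, ⌊x.2⌋), ?_⟩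
      show x + (-((⌊x.1⌋ : ℤ) : ℝ), -((⌊x.2⌋ : ℤ) : ℝ)) ∈ s ∩ Omg
      have hxv : x + (-((⌊x.1⌋ : ℤ) : ℝ), -((⌊x.2⌋ : ℤ) : ℝ))
          = (x.1 - (⌊x.1⌋ : ℝ), x.2 - (⌊x.2⌋ : ℝ)) := by
        ext <;> simp [sub_eq_add_neg]
      have hw_eq : w (x.1 - (⌊x.1⌋ : ℝ), x.2 - (⌊x.2⌋ : ℝ)) = w x := by
        have := per_int hwper ⌊x.1⌋ ⌊x.2⌋ (x.1 - (⌊x.1⌋ : ℝ), x.2 - (⌊x.2⌋ : ℝ))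
        simpa using this.symm
      rw [hxv]
      constructor
      · show _ ∈ s
        rw [hsdef, mem_setOf_eq, hw_eq]
        exact hx
      · refine ⟨⟨by simp [sub_nonneg, Int.floor_le], ?_⟩,
          ⟨by simp [sub_nonneg, Int.floor_le], ?_⟩⟩
        · show x.1 - (⌊x.1⌋ : ℝ) < 1
          linarith [Int.lt_floor_add_one x.1]
        · show x.2 - (⌊x.2⌋ : ℝ) < 1
          linarith [Int.lt_floor_add_one x.2]
    refine measure_mono_null hcov (measure_iUnion_null fun p => ?_)
    exact ((measurePreserving_add_right volume ((-(p.1 : ℝ), -(p.2 : ℝ)))).quasiMeasurePreserving).preimage_null hs0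
  -- Step 3: volume of Q
  have hQvol : volume (Qset h₁ h₂) = ENNReal.ofReal h₁ * ENNReal.ofReal h₂ := by
    rw [Qset, Measure.volume_eq_prod, Measure.prod_prod, Real.volume_Icc, Real.volume_Icc]
    congr 1 <;> ring_nf
  have hCnn : 0 ≤ C := ENNReal.toReal_nonneg
  -- Step 4: nodal averages are bounded by C
  have hnodal : ∀ k l : ℤ, |nodalAvg h₁ h₂ w k l| ≤ C := by
    intro k l
    have hfin : volume (Qset h₁ h₂) < ⊤ := by
      rw [hQvol]; exact ENNReal.mul_lt_top ENNReal.ofReal_lt_top ENNReal.ofReal_lt_top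
    have hae : ∀ᵐ ζ ∂(volume.restrict (Qset h₁ h₂)),
        ‖w ((k : ℝ) * h₁ + ζ.1, (l : ℝ) * h₂ + ζ.2)‖ ≤ C := by
      apply ae_restrict_of_ae
      rw [ae_iff] at hglob ⊢
      have hset : {ζ : ℝ × ℝ | ¬ ‖w ((k : ℝ) * h₁ + ζ.1, (l : ℝ) * h₂ + ζ.2)‖ ≤ C}
          = (fun ζ : ℝ × ℝ => ζ + ((k : ℝ) * h₁, (l : ℝ) * h₂)) ⁻¹' {x | ¬ ‖w x‖ ≤ C} := by
        ext ζ
        simp only [mem_setOf_eq, mem_preimage]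
        rw [show ζ + ((k : ℝ) * h₁, (l : ℝ) * h₂) = ((k : ℝ) * h₁ + ζ.1, (l : ℝ) * h₂ + ζ.2)
          from by ext <;> simp [add_comm]]
      rw [hset]
      exact ((measurePreserving_add_right volume (((k : ℝ) * h₁, (l : ℝ) * h₂))).quasiMeasurePreserving).preimage_null hglob
    have hbnd := norm_setIntegral_le_of_norm_le_const_ae (μ := volume) hfin hae
    have htor : (volume (Qset h₁ h₂)).toReal = h₁ * h₂ := by
      rw [hQvol, ENNReal.toReal_mul, ENNReal.toReal_ofReal hh1.le, ENNReal.toReal_ofReal hh2.le]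
    rw [measureReal_def, htor] at hbnd
    rw [nodalAvg, abs_mul, abs_inv, abs_of_pos (mul_pos hh1 hh2)]
    calc (h₁ * h₂)⁻¹ * |∫ ζ in Qset h₁ h₂, w ((k : ℝ) * h₁ + ζ.1, (l : ℝ) * h₂ + ζ.2)|
        ≤ (h₁ * h₂)⁻¹ * (C * (h₁ * h₂)) := by
          apply mul_le_mul_of_nonneg_left _ (inv_nonneg.2 (mul_pos hh1 hh2).le)
          simpa [Real.norm_eq_abs] using hbnd
      _ = C := by field_simp
  -- Step 5: pointwise bound for Pw
  have hPbound : ∀ z : ℝ × ℝ, |Pw z| ≤ C := by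
    intro z
    set k := ⌊z.1 / h₁⌋ with hk
    set l := ⌊z.2 / h₂⌋ with hl
    obtain ⟨a, b, c, d, hP⟩ := hbil k l
    have hxm : z.1 ∈ Icc ((k : ℝ) * h₁) ((k : ℝ) * h₁ + h₁) := by
      have hf1 : ((k : ℝ)) ≤ z.1 / h₁ := Int.floor_le (z.1 / h₁)
      have hf2 : z.1 / h₁ < (k : ℝ) + 1 := Int.lt_floor_add_one (z.1 / h₁)
      have he : (z.1 / h₁) * h₁ = z.1 := by field_simp
      constructor
      · have := mul_le_mul_of_nonneg_right hf1 hh1.le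
        rwa [he] at this
      · have := mul_le_mul_of_nonneg_right hf2.le hh1.le
        rw [he] at this
        linarith
    have hym : z.2 ∈ Icc ((l : ℝ) * h₂) ((l : ℝ) * h₂ + h₂) := by
      have hf1 : ((l : ℝ)) ≤ z.2 / h₂ := Int.floor_le (z.2 / h₂)
      have hf2 : z.2 / h₂ < (l : ℝ) + 1 := Int.lt_floor_add_one (z.2 / h₂)
      have he : (z.2 / h₂) * h₂ = z.2 := by field_simp
      constructor
      · have := mul_le_mul_of_nonneg_right hf1 hh2.le
        rwa [he] at this
      · have := mul_le_mul_of_nonneg_right hf2.le hh2.le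
        rw [he] at this
        linarith
    -- the four corners are in the cell
    have hmem : ∀ (i j : ℕ), i ≤ 1 → j ≤ 1 →
        ((k : ℝ) * h₁ + i * h₁, (l : ℝ) * h₂ + j * h₂) ∈ cell h₁ h₂ k l := by
      intro i j hi hj
      constructor
      · constructor
        · simp only [Prod.fst]; nlinarith [Nat.cast_nonneg (α := ℝ) i]
        · have : (i : ℝ) ≤ 1 := by exact_mod_cast hi
          simp only [Prod.fst]; nlinarith
      · constructor
        · simp only [Prod.snd]; nlinarith [Nat.cast_nonneg (α := ℝ) j]
        · have : (j : ℝ) ≤ 1 := by exact_mod_cast hj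
          simp only [Prod.snd]; nlinarith
    have hcorner : ∀ k' l' : ℤ, |Pw ((k' : ℝ) * h₁, (l' : ℝ) * h₂)| ≤ C := by
      intro k' l'; rw [hnod k' l']; exact hnodal k' l'
    set P : ℝ → ℝ → ℝ := fun u v => a + b * u + c * v + d * (u * v) with hPdef
    have hcPw : ∀ (i j : ℕ), i ≤ 1 → j ≤ 1 →
        P ((k : ℝ) * h₁ + i * h₁) ((l : ℝ) * h₂ + j * h₂)
          = Pw ((k : ℝ) * h₁ + i * h₁, (l : ℝ) * h₂ + j * h₂) :=
      fun i j hi hj => (hP _ (hmem i j hi hj)).symm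
    have h00 : |P ((k : ℝ) * h₁) ((l : ℝ) * h₂)| ≤ C := by
      have := hcPw 0 0 (by norm_num) (by norm_num)
      simp only [Nat.cast_zero, zero_mul, add_zero] at this
      rw [this]; exact hcorner k l
    have h10 : |P ((k : ℝ) * h₁ + h₁) ((l : ℝ) * h₂)| ≤ C := by
      have := hcPw 1 0 (by norm_num) (by norm_num)
      simp only [Nat.cast_one, one_mul, Nat.cast_zero, zero_mul, add_zero] at this
      rw [this]
      have hcast : (k : ℝ) * h₁ + h₁ = ((k + 1 : ℤ) : ℝ) * h₁ := by push_cast; ring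
      rw [hcast]; exact hcorner (k + 1) l
    have h01 : |P ((k : ℝ) * h₁) ((l : ℝ) * h₂ + h₂)| ≤ C := by
      have := hcPw 0 1 (by norm_num) (by norm_num)
      simp only [Nat.cast_one, one_mul, Nat.cast_zero, zero_mul, add_zero] at this
      rw [this]
      have hcast : (l : ℝ) * h₂ + h₂ = ((l + 1 : ℤ) : ℝ) * h₂ := by push_cast; ring
      rw [hcast]; exact hcorner k (l + 1)
    have h11 : |P ((k : ℝ) * h₁ + h₁) ((l : ℝ) * h₂ + h₂)| ≤ C := by
      have := hcPw 1 1 (by norm_num) (by norm_num)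
      simp only [Nat.cast_one, one_mul] at this
      rw [this]
      have hcast1 : (k : ℝ) * h₁ + h₁ = ((k + 1 : ℤ) : ℝ) * h₁ := by push_cast; ring
      have hcast2 : (l : ℝ) * h₂ + h₂ = ((l + 1 : ℤ) : ℝ) * h₂ := by push_cast; ring
      rw [hcast1, hcast2]; exact hcorner (k + 1) (l + 1)
    have hPz : Pw z = P z.1 z.2 := by
      apply hP
      constructor
      · exact ⟨hxm.1, by linarith [hxm.2]⟩
      · exact ⟨hym.1, by linarith [hym.2]⟩
    rw [hPz]
    exact bilin_bound hh1 hh2 P (fun u v => rfl) h00 h10 h01 h11 hxm hym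
  -- Step 6: conclude
  have haeP : ∀ᵐ x ∂(volume.restrict Omg), ‖Pw x‖ ≤ C :=
    ae_of_all _ fun x => by simpa [Real.norm_eq_abs] using hPbound x
  calc eLpNorm Pw ⊤ (volume.restrict Omg)
      ≤ (volume.restrict Omg) Set.univ ^ (⊤ : ℝ≥0∞).toReal⁻¹ * ENNReal.ofReal C :=
        eLpNorm_le_of_ae_bound haeP
    _ = M := by
        rw [ENNReal.toReal_top, inv_zero, ENNReal.rpow_zero, one_mul,
          hCdef, ENNReal.ofReal_toReal hMne]
end
end

section
/- Let w : ℝ² → ℝ be continuously differentiable and 1-periodic in each variable. Then for each i ∈ {1, 2}, the interpolant satisfies ∫_{[0,1)²} |∂_i(Π_h w)(z)| dz ≤ ∫_{[0,1)²} |∂_i w(z)| dz, where ∂_i(Π_h w) denotes the (almost everywhere defined, piecewise smooth) partial derivative of Π_h w. -/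
open MeasureTheory Set
open scoped ENNReal NNReal

noncomputable section

lemma fderiv_shift (w : ℝ × ℝ → ℝ) (hw : Differentiable ℝ w) (v : ℝ × ℝ)
    (hv : ∀ z, w (z + v) = w z) (z : ℝ × ℝ) :
    fderiv ℝ w (z + v) = fderiv ℝ w z := by
  have h2 : HasFDerivAt (fun z : ℝ × ℝ => z + v) (ContinuousLinearMap.id ℝ (ℝ × ℝ)) z := by
    simpa using (hasFDerivAt_id z).add_const v
  have h1 : HasFDerivAt (fun z : ℝ × ℝ => w (z + v)) (fderiv ℝ w (z + v)) z := by
    simpa [Function.comp_def] using ((hw (z + v)).hasFDerivAt).comp z h2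
  have h3 : HasFDerivAt w (fderiv ℝ w (z + v)) z := by
    have : (fun z : ℝ × ℝ => w (z + v)) = w := funext hv
    rwa [this] at h1
  exact h3.fderiv.symm

lemma fderiv_bilin_apply (a b c d : ℝ) (z : ℝ × ℝ) :
    fderiv ℝ (fun z : ℝ × ℝ => a + b * z.1 + c * z.2 + d * (z.1 * z.2)) z (1, 0)
      = b + d * z.2 := by
  have h1 : HasFDerivAt (fun z : ℝ × ℝ => z.1 * z.2)
      (z.1 • ContinuousLinearMap.snd ℝ ℝ ℝ + z.2 • ContinuousLinearMap.fst ℝ ℝ ℝ) z :=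
    (hasFDerivAt_fst (p := z)).mul (hasFDerivAt_snd (p := z))
  have h : HasFDerivAt (fun z : ℝ × ℝ => a + b * z.1 + c * z.2 + d * (z.1 * z.2))
      (((0 : ℝ × ℝ →L[ℝ] ℝ) + b • ContinuousLinearMap.fst ℝ ℝ ℝ) + c • ContinuousLinearMap.snd ℝ ℝ ℝ
        + d • (z.1 • ContinuousLinearMap.snd ℝ ℝ ℝ + z.2 • ContinuousLinearMap.fst ℝ ℝ ℝ)) z :=
    (((hasFDerivAt_const a z).add ((hasFDerivAt_fst (p := z)).const_mul b)).add
      ((hasFDerivAt_snd (p := z)).const_mul c)).add (h1.const_mul d)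
  rw [h.fderiv]
  simp

lemma trapezoid (b d c h : ℝ) (hh : 0 < h) :
    (∫ y in c..(c + h), |b + d * y|) ≤ h / 2 * (|b + d * c| + |b + d * (c + h)|) := by
  set A := |b + d * c| with hA
  set B := |b + d * (c + h)| with hB
  have key : (∫ y in c..(c + h), |b + d * y|)
      ≤ ∫ y in c..(c + h), ((c + h - y) / h * A + (y - c) / h * B) := by
    apply intervalIntegral.integral_mono_on (by linarith)
    · exact (continuous_const.add (continuous_const.mul continuous_id)).abs.intervalIntegrable _ _
    · apply ContinuousOn.intervalIntegrable
      fun_prop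
    · intro y hy
      obtain ⟨hy1, hy2⟩ := hy
      have hrep : b + d * y = (c + h - y) / h * (b + d * c) + (y - c) / h * (b + d * (c + h)) := by
        field_simp
        ring
      calc |b + d * y| = |(c + h - y) / h * (b + d * c) + (y - c) / h * (b + d * (c + h))| := by
            rw [← hrep]
        _ ≤ |(c + h - y) / h * (b + d * c)| + |(y - c) / h * (b + d * (c + h))| := abs_add_le _ _
        _ = (c + h - y) / h * A + (y - c) / h * B := by
            rw [abs_mul, abs_mul, abs_of_nonneg (div_nonneg (by linarith) hh.le),
              abs_of_nonneg (div_nonneg (by linarith) hh.le)]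
  have comp : (∫ y in c..(c + h), ((c + h - y) / h * A + (y - c) / h * B))
      = h / 2 * (A + B) := by
    have hrw : ∀ y : ℝ, (c + h - y) / h * A + (y - c) / h * B
        = ((c + h) * A - c * B) / h + ((B - A) / h) * y := by
      intro y; field_simp; ring
    have hne : h ≠ 0 := hh.ne'
    simp_rw [hrw]
    rw [intervalIntegral.integral_add (intervalIntegrable_const)
      ((by fun_prop : Continuous fun y : ℝ => (B - A) / h * y).intervalIntegrable _ _),
      intervalIntegral.integral_const, intervalIntegral.integral_const_mul, integral_id]
    rw [smul_eq_mul]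
    field_simp
    ring
  linarith

lemma integrableOn_rect {f : ℝ × ℝ → ℝ} (hf : Continuous f) {x₀ x₁ y₀ y₁ : ℝ}
    {s : Set (ℝ × ℝ)} (hs : s ⊆ Icc x₀ x₁ ×ˢ Icc y₀ y₁) :
    IntegrableOn f s := by
  apply IntegrableOn.mono_set _ hs
  rw [Icc_prod_Icc]
  exact hf.integrableOn_Icc

lemma setIntegral_prod_snd (f : ℝ → ℝ) (hf : Continuous f) (x₀ x₁ y₀ y₁ : ℝ) (hx : x₀ ≤ x₁) :
    (∫ z in Ico x₀ x₁ ×ˢ Ico y₀ y₁, f z.2) = (x₁ - x₀) * ∫ y in Ico y₀ y₁, f y := by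
  have hint : IntegrableOn (fun z : ℝ × ℝ => f z.2) (Ico x₀ x₁ ×ˢ Ico y₀ y₁) :=
    integrableOn_rect (hf.comp continuous_snd)
      (prod_mono Ico_subset_Icc_self Ico_subset_Icc_self)
  rw [Measure.volume_eq_prod] at hint ⊢
  rw [MeasureTheory.setIntegral_prod _ hint]
  simp only [MeasureTheory.setIntegral_const]
  rw [Real.volume_real_Ico_of_le hx, smul_eq_mul]

lemma setIntegral_prod_snd' (f : ℝ → ℝ) (hf : Continuous f) (x₀ x₁ y₀ y₁ : ℝ) (hx : x₀ ≤ x₁) :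
    (∫ z in Icc x₀ x₁ ×ˢ Icc y₀ y₁, f z.2) = (x₁ - x₀) * ∫ y in Icc y₀ y₁, f y := by
  have hint : IntegrableOn (fun z : ℝ × ℝ => f z.2) (Icc x₀ x₁ ×ˢ Icc y₀ y₁) :=
    integrableOn_rect (hf.comp continuous_snd) (subset_refl _)
  rw [Measure.volume_eq_prod] at hint ⊢
  rw [MeasureTheory.setIntegral_prod _ hint]
  simp only [MeasureTheory.setIntegral_const]
  rw [Real.volume_real_Icc_of_le hx, smul_eq_mul]

lemma cell_bound_s4 (Pw : ℝ × ℝ → ℝ) (a b c d x₀ x₁ y₀ y₁ : ℝ) (hx : x₀ < x₁) (hy : y₀ < y₁)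
    (hcoef : ∀ z ∈ Icc x₀ x₁ ×ˢ Icc y₀ y₁, Pw z = a + b * z.1 + c * z.2 + d * (z.1 * z.2)) :
    IntegrableOn (fun z => |fderiv ℝ Pw z (1, 0)|) (Ico x₀ x₁ ×ˢ Ico y₀ y₁) ∧
      (∫ z in Ico x₀ x₁ ×ˢ Ico y₀ y₁, |fderiv ℝ Pw z (1, 0)|)
        ≤ (x₁ - x₀) * ((y₁ - y₀) / 2) * (|b + d * y₀| + |b + d * y₁|) := by
  set s : Set (ℝ × ℝ) := Ico x₀ x₁ ×ˢ Ico y₀ y₁ with hs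
  have hms : MeasurableSet s := measurableSet_Ico.prod measurableSet_Ico
  set bad : Set (ℝ × ℝ) := ({x₀} : Set ℝ) ×ˢ (univ : Set ℝ) ∪ (univ : Set ℝ) ×ˢ ({y₀} : Set ℝ)
    with hbad
  have hbadnull : volume bad = 0 := by
    apply measure_union_null
    · rw [Measure.volume_eq_prod, Measure.prod_prod]
      simp
    · rw [Measure.volume_eq_prod, Measure.prod_prod]
      simp
  have hae : ∀ᵐ z : ℝ × ℝ, z ∈ s → |fderiv ℝ Pw z (1, 0)| = |b + d * z.2| := by
    have hc : ∀ᵐ z : ℝ × ℝ, z ∉ bad := measure_eq_zero_iff_ae_notMem.mp hbadnull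
    filter_upwards [hc] with z hz hzs
    have hzoo : z ∈ Ioo x₀ x₁ ×ˢ Ioo y₀ y₁ := by
      obtain ⟨⟨ha1, ha2⟩, ⟨hb1, hb2⟩⟩ := hzs
      constructor
      · constructor
        · rcases lt_or_eq_of_le ha1 with h | h
          · exact h
          · exact absurd (Or.inl ⟨h.symm, mem_univ _⟩) hz
        · exact ha2
      · constructor
        · rcases lt_or_eq_of_le hb1 with h | h
          · exact h
          · exact absurd (Or.inr ⟨mem_univ _, h.symm⟩) hz
        · exact hb2
    have hopen : IsOpen (Ioo x₀ x₁ ×ˢ Ioo y₀ y₁) := isOpen_Ioo.prod isOpen_Ioo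
    have heq : Pw =ᶠ[nhds z] fun z => a + b * z.1 + c * z.2 + d * (z.1 * z.2) := by
      apply Filter.eventuallyEq_of_mem (hopen.mem_nhds hzoo)
      intro y hy
      exact hcoef y (prod_mono Ioo_subset_Icc_self Ioo_subset_Icc_self hy)
    rw [heq.fderiv_eq, fderiv_bilin_apply]
  have hG : Continuous fun z : ℝ × ℝ => |b + d * z.2| := by fun_prop
  have hGint : IntegrableOn (fun z : ℝ × ℝ => |b + d * z.2|) s :=
    integrableOn_rect hG (hs ▸ prod_mono Ico_subset_Icc_self Ico_subset_Icc_self)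
  have hint : IntegrableOn (fun z => |fderiv ℝ Pw z (1, 0)|) s := by
    apply hGint.congr
    exact (MeasureTheory.ae_restrict_iff' hms).2
      (by filter_upwards [hae] with z hz hzs; exact (hz hzs).symm)
  refine ⟨hint, ?_⟩
  have heqI : (∫ z in s, |fderiv ℝ Pw z (1, 0)|) = ∫ z in s, |b + d * z.2| :=
    MeasureTheory.setIntegral_congr_ae hms (by filter_upwards [hae] with z hz hzs; exact hz hzs)
  have h0 := setIntegral_prod_snd (fun y => |b + d * y|) (by fun_prop) x₀ x₁ y₀ y₁ hx.le
  rw [heqI, hs, h0]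
  have h3' : y₀ + (y₁ - y₀) = y₁ := by ring
  have h1 : (∫ y in Ico y₀ y₁, |b + d * y|) = ∫ y in y₀..y₁, |b + d * y| := by
    rw [MeasureTheory.restrict_Ico_eq_restrict_Ioc,
      ← intervalIntegral.integral_of_le hy.le]
  rw [h1]
  have h2 := trapezoid b d y₀ (y₁ - y₀) (by linarith)
  rw [h3'] at h2
  calc (x₁ - x₀) * ∫ y in y₀..y₁, |b + d * y|
      ≤ (x₁ - x₀) * ((y₁ - y₀) / 2 * (|b + d * y₀| + |b + d * y₁|)) :=
        mul_le_mul_of_nonneg_left h2 (by linarith)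
    _ = (x₁ - x₀) * ((y₁ - y₀) / 2) * (|b + d * y₀| + |b + d * y₁|) := by ring

def gOne (w : ℝ × ℝ → ℝ) (y : ℝ) : ℝ := ∫ t in (0:ℝ)..1, |fderiv ℝ w (t, y) (1, 0)|

lemma gOne_continuous (w : ℝ × ℝ → ℝ) (hw : ContDiff ℝ 1 w) : Continuous (gOne w) := by
  have h1 : Continuous (fderiv ℝ w) := hw.continuous_fderiv one_ne_zero
  have hu : Continuous fun z : ℝ × ℝ => |fderiv ℝ w z (1, 0)| := by fun_prop
  have h2 : Continuous (Function.uncurry fun y t => |fderiv ℝ w (t, y) (1, 0)|) := by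
    have : (Function.uncurry fun y t => |fderiv ℝ w (t, y) (1, 0)|)
        = (fun z : ℝ × ℝ => |fderiv ℝ w z (1, 0)|) ∘ Prod.swap := rfl
    rw [this]
    exact hu.comp continuous_swap
  exact intervalIntegral.continuous_parametric_intervalIntegral_of_continuous' h2 0 1

lemma row_bound (w : ℝ × ℝ → ℝ) (hw : ContDiff ℝ 1 w)
    (hper1 : ∀ z : ℝ × ℝ, w (z.1 + 1, z.2) = w z)
    (N₁ : ℕ) (h₁ h₂ : ℝ) (hp₁ : 0 < h₁) (hp₂ : 0 < h₂) (e₁ : (N₁ : ℝ) * h₁ = 1) (l : ℤ) :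
    ∑ k ∈ Finset.range N₁,
        |nodalAvg h₁ h₂ w (k + 1) l - nodalAvg h₁ h₂ w k l|
      ≤ h₂⁻¹ * ∫ t in ((l : ℝ) * h₂ - h₂ / 2)..((l : ℝ) * h₂ + h₂ / 2), gOne w t := by
  set u : ℝ × ℝ → ℝ := fun z => fderiv ℝ w z (1, 0) with hu_def
  have hufc : Continuous (fderiv ℝ w) := hw.continuous_fderiv one_ne_zero
  have hu : Continuous u := by fun_prop
  have hdiff : Differentiable ℝ w := hw.differentiable one_ne_zero
  have huper : ∀ x y : ℝ, u (x + 1, y) = u (x, y) := by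
    intro x y
    have := fderiv_shift w hdiff (1, 0)
      (by intro z; show w (z.1 + 1, z.2 + 0) = w z; rw [add_zero]; exact hper1 z) (x, y)
    simp only [hu_def]
    rw [show ((x : ℝ) + 1, y) = ((x, y) : ℝ × ℝ) + (1, 0) by simp, this]
  set y₀ : ℝ := (l : ℝ) * h₂ with hy₀
  -- FTC
  have ftc : ∀ (x₁ x₂ y : ℝ), w (x₂, y) - w (x₁, y) = ∫ t in x₁..x₂, u (t, y) := by
    intro x₁ x₂ y
    refine (intervalIntegral.integral_eq_sub_of_hasDerivAt (f := fun x => w (x, y))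
      (f' := fun t => u (t, y)) (fun t _ => ?_) ?_).symm
    · exact (hdiff (t, y)).hasFDerivAt.comp_hasDerivAt t
        ((hasDerivAt_id t).prodMk (hasDerivAt_const t y))
    · exact (hu.comp (by fun_prop : Continuous fun t : ℝ => ((t, y) : ℝ × ℝ))).intervalIntegrable _ _
  -- the family Ψ
  set Ψ : ℕ → ℝ × ℝ → ℝ := fun k ζ =>
    ∫ t in ((k : ℝ) * h₁)..((k : ℝ) * h₁ + h₁), |u (t + ζ.1, y₀ + ζ.2)| with hΨ_def
  have hΨcont : ∀ k, Continuous (Ψ k) := by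
    intro k
    exact intervalIntegral.continuous_parametric_intervalIntegral_of_continuous'
      (by fun_prop : Continuous (Function.uncurry fun (ζ : ℝ × ℝ) t => |u (t + ζ.1, y₀ + ζ.2)|)) _ _
  have hΨint : ∀ k, IntegrableOn (Ψ k) (Qset h₁ h₂) :=
    fun k => integrableOn_rect (hΨcont k) (subset_refl _)
  -- step: per-k bound
  have hk : ∀ k : ℕ,
      |nodalAvg h₁ h₂ w (k + 1) l - nodalAvg h₁ h₂ w k l|
        ≤ (h₁ * h₂)⁻¹ * ∫ ζ in Qset h₁ h₂, Ψ k ζ := by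
    intro k
    set Δ : ℝ × ℝ → ℝ := fun ζ =>
      w (((k : ℝ) + 1) * h₁ + ζ.1, y₀ + ζ.2) - w ((k : ℝ) * h₁ + ζ.1, y₀ + ζ.2) with hΔ_def
    have hΔcont : Continuous Δ := by fun_prop
    have hdiffeq : nodalAvg h₁ h₂ w (k + 1) l - nodalAvg h₁ h₂ w k l
        = (h₁ * h₂)⁻¹ * ∫ ζ in Qset h₁ h₂, Δ ζ := by
      rw [nodalAvg, nodalAvg, ← mul_sub, ← MeasureTheory.integral_sub
        (integrableOn_rect (by fun_prop) (subset_refl (Qset h₁ h₂)))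
        (integrableOn_rect (by fun_prop) (subset_refl (Qset h₁ h₂)))]
      push_cast
      rfl
    have habs : ∀ ζ ∈ Qset h₁ h₂, |Δ ζ| ≤ Ψ k ζ := by
      intro ζ _
      have h1 : Δ ζ = ∫ t in ((k : ℝ) * h₁ + ζ.1)..(((k : ℝ) + 1) * h₁ + ζ.1), u (t, y₀ + ζ.2) :=
        ftc _ _ _
      have h2 : Ψ k ζ = ∫ t in ((k : ℝ) * h₁ + ζ.1)..(((k : ℝ) + 1) * h₁ + ζ.1), |u (t, y₀ + ζ.2)| := by
        rw [hΨ_def]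
        simp only
        rw [intervalIntegral.integral_comp_add_right (fun t => |u (t, y₀ + ζ.2)|) ζ.1]
        ring_nf
      rw [h1, h2]
      exact intervalIntegral.abs_integral_le_integral_abs (by nlinarith)
    calc |nodalAvg h₁ h₂ w (k + 1) l - nodalAvg h₁ h₂ w k l|
        = (h₁ * h₂)⁻¹ * |∫ ζ in Qset h₁ h₂, Δ ζ| := by
          rw [hdiffeq, abs_mul, abs_of_nonneg (by positivity)]
      _ ≤ (h₁ * h₂)⁻¹ * ∫ ζ in Qset h₁ h₂, |Δ ζ| := by
          apply mul_le_mul_of_nonneg_left _ (by positivity)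
          simpa [Real.norm_eq_abs] using
            MeasureTheory.norm_integral_le_integral_norm (μ := volume.restrict (Qset h₁ h₂)) Δ
      _ ≤ (h₁ * h₂)⁻¹ * ∫ ζ in Qset h₁ h₂, Ψ k ζ := by
          apply mul_le_mul_of_nonneg_left _ (by positivity)
          exact MeasureTheory.setIntegral_mono_on
            (integrableOn_rect hΔcont.abs (subset_refl _)) (hΨint k)
            (measurableSet_Icc.prod measurableSet_Icc) habs
  -- sum up
  have hsum : ∑ k ∈ Finset.range N₁, (h₁ * h₂)⁻¹ * ∫ ζ in Qset h₁ h₂, Ψ k ζ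
      = (h₁ * h₂)⁻¹ * ∫ ζ in Qset h₁ h₂, ∑ k ∈ Finset.range N₁, Ψ k ζ := by
    rw [← Finset.mul_sum, MeasureTheory.integral_finset_sum _ (fun k _ => hΨint k)]
  have hΨsum : ∀ ζ ∈ Qset h₁ h₂, ∑ k ∈ Finset.range N₁, Ψ k ζ = gOne w (y₀ + ζ.2) := by
    intro ζ _
    set y' : ℝ := y₀ + ζ.2
    have hper : Function.Periodic (fun t => |u (t, y')|) 1 := fun t => by
      simp only [huper]
    have hΨ' : ∀ k : ℕ, Ψ k ζ = ∫ t in (ζ.1 + (k : ℝ) * h₁)..(ζ.1 + ((k : ℝ) + 1) * h₁), |u (t, y')| := by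
      intro k
      rw [hΨ_def]
      simp only
      rw [intervalIntegral.integral_comp_add_right (fun t => |u (t, y')|) ζ.1]
      congr 1 <;> ring
    have hadj := intervalIntegral.sum_integral_adjacent_intervals
      (a := fun k : ℕ => ζ.1 + (k : ℝ) * h₁) (n := N₁) (μ := volume)
      (f := fun t => |u (t, y')|)
      (fun k _ => ((hu.comp (by fun_prop : Continuous fun t : ℝ => ((t, y') : ℝ × ℝ))).abs).intervalIntegrable _ _)
    have key : ∑ k ∈ Finset.range N₁, Ψ k ζ = ∫ t in ζ.1..(ζ.1 + (N₁ : ℝ) * h₁), |u (t, y')| := by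
      have hadj' := hadj
      push_cast at hadj'
      norm_num at hadj'
      rw [← hadj']
      exact Finset.sum_congr rfl fun k _ => hΨ' k
    rw [key, show ζ.1 + (N₁ : ℝ) * h₁ = ζ.1 + 1 by rw [e₁]]
    rw [hper.intervalIntegral_add_eq ζ.1 0]
    simp [gOne]
    rfl
  have hQ : (∫ ζ in Qset h₁ h₂, ∑ k ∈ Finset.range N₁, Ψ k ζ)
      = ∫ ζ in Qset h₁ h₂, gOne w (y₀ + ζ.2) :=
    MeasureTheory.setIntegral_congr_fun (measurableSet_Icc.prod measurableSet_Icc) hΨsum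
  have hg : Continuous (gOne w) := gOne_continuous w hw
  have hQ2 : (∫ ζ in Qset h₁ h₂, gOne w (y₀ + ζ.2))
      = h₁ * ∫ t in (y₀ - h₂ / 2)..(y₀ + h₂ / 2), gOne w t := by
    rw [Qset, setIntegral_prod_snd' (fun s => gOne w (y₀ + s)) (by fun_prop) _ _ _ _ (by linarith)]
    have : (∫ s in Icc (-(h₂/2)) (h₂/2), gOne w (y₀ + s))
        = ∫ t in (y₀ - h₂ / 2)..(y₀ + h₂ / 2), gOne w t := by
      rw [← MeasureTheory.restrict_Ioc_eq_restrict_Icc,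
        ← intervalIntegral.integral_of_le (by linarith : -(h₂/2) ≤ h₂/2)]
      rw [intervalIntegral.integral_comp_add_left (fun t => gOne w t) y₀]
      congr 1 <;> ring
    rw [this]
    ring
  calc ∑ k ∈ Finset.range N₁, |nodalAvg h₁ h₂ w (k + 1) l - nodalAvg h₁ h₂ w k l|
      ≤ ∑ k ∈ Finset.range N₁, (h₁ * h₂)⁻¹ * ∫ ζ in Qset h₁ h₂, Ψ k ζ :=
        Finset.sum_le_sum fun k _ => hk k
    _ = (h₁ * h₂)⁻¹ * ∫ ζ in Qset h₁ h₂, ∑ k ∈ Finset.range N₁, Ψ k ζ := hsum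
    _ = (h₁ * h₂)⁻¹ * (h₁ * ∫ t in (y₀ - h₂ / 2)..(y₀ + h₂ / 2), gOne w t) := by rw [hQ, hQ2]
    _ = h₂⁻¹ * ∫ t in ((l : ℝ) * h₂ - h₂ / 2)..((l : ℝ) * h₂ + h₂ / 2), gOne w t := by
        rw [hy₀]
        field_simp

lemma gOne_periodic (w : ℝ × ℝ → ℝ) (hw : ContDiff ℝ 1 w)
    (hper2 : ∀ z : ℝ × ℝ, w (z.1, z.2 + 1) = w z) :
    Function.Periodic (gOne w) 1 := by
  intro y
  unfold gOne
  congr 1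
  funext t
  have := fderiv_shift w (hw.differentiable one_ne_zero) (0, 1)
    (by intro z; show w (z.1 + 0, z.2 + 1) = w z; rw [add_zero]; exact hper2 z) (t, y)
  rw [show ((t : ℝ), y + 1) = ((t, y) : ℝ × ℝ) + (0, 1) from by show _ = (t + 0, y + 1); rw [add_zero], this]

lemma col_sum (w : ℝ × ℝ → ℝ) (hw : ContDiff ℝ 1 w)
    (hper2 : ∀ z : ℝ × ℝ, w (z.1, z.2 + 1) = w z)
    (N₂ : ℕ) (h₂ : ℝ) (hp₂ : 0 < h₂) (e₂ : (N₂ : ℝ) * h₂ = 1) :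
    ∑ l ∈ Finset.range N₂, ∫ t in ((l : ℝ) * h₂ - h₂ / 2)..((l : ℝ) * h₂ + h₂ / 2), gOne w t
      = ∫ y in (0:ℝ)..1, gOne w y := by
  have hg : Continuous (gOne w) := gOne_continuous w hw
  have hadj := intervalIntegral.sum_integral_adjacent_intervals
    (a := fun l : ℕ => (l : ℝ) * h₂ - h₂ / 2) (n := N₂) (μ := volume) (f := gOne w)
    (fun l _ => hg.intervalIntegrable _ _)
  push_cast at hadj
  have h1 : ∑ l ∈ Finset.range N₂, (∫ t in ((l : ℝ) * h₂ - h₂ / 2)..((l : ℝ) * h₂ + h₂ / 2), gOne w t)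
      = ∫ t in (-(h₂ / 2))..((N₂ : ℝ) * h₂ - h₂ / 2), gOne w t := by
    rw [show -(h₂ / 2) = (0:ℝ) * h₂ - h₂ / 2 by ring, ← hadj]
    apply Finset.sum_congr rfl
    intro l _
    congr 1
    ring
  rw [h1, show ((N₂ : ℝ) * h₂ - h₂ / 2) = -(h₂ / 2) + 1 by rw [e₂]; ring]
  rw [(gOne_periodic w hw hper2).intervalIntegral_add_eq (-(h₂/2)) 0]
  norm_num

lemma fubini_gOne (w : ℝ × ℝ → ℝ) (hw : ContDiff ℝ 1 w) :
    (∫ y in (0:ℝ)..1, gOne w y) = ∫ z in Omg, |fderiv ℝ w z (1, 0)| := by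
  have hufc : Continuous (fderiv ℝ w) := hw.continuous_fderiv one_ne_zero
  have hu : Continuous fun z : ℝ × ℝ => |fderiv ℝ w z (1, 0)| := by fun_prop
  have hint : IntegrableOn (fun z : ℝ × ℝ => |fderiv ℝ w z (1, 0)|) (Ico (0:ℝ) 1 ×ˢ Ico (0:ℝ) 1) :=
    integrableOn_rect hu (prod_mono Ico_subset_Icc_self Ico_subset_Icc_self)
  have h1 : (∫ z in Omg, |fderiv ℝ w z (1, 0)|)
      = ∫ x in Ico (0:ℝ) 1, ∫ y in Ico (0:ℝ) 1, |fderiv ℝ w (x, y) (1, 0)| := by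
    rw [Omg, Measure.volume_eq_prod] at *
    exact MeasureTheory.setIntegral_prod _ hint
  have hswap : (∫ x in Ico (0:ℝ) 1, ∫ y in Ico (0:ℝ) 1, |fderiv ℝ w (x, y) (1, 0)|)
      = ∫ y in Ico (0:ℝ) 1, ∫ x in Ico (0:ℝ) 1, |fderiv ℝ w (x, y) (1, 0)| := by
    apply MeasureTheory.integral_integral_swap
    rw [Measure.prod_restrict]
    have : (Function.uncurry fun x y => |fderiv ℝ w (x, y) (1, 0)|)
        = fun z : ℝ × ℝ => |fderiv ℝ w z (1, 0)| := by
      funext z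
      simp [Function.uncurry]
    rw [this]
    rwa [Measure.volume_eq_prod] at hint
  have hinner : ∀ y : ℝ, (∫ x in Ico (0:ℝ) 1, |fderiv ℝ w (x, y) (1, 0)|) = gOne w y := by
    intro y
    rw [MeasureTheory.restrict_Ico_eq_restrict_Ioc,
      ← intervalIntegral.integral_of_le (zero_le_one), gOne]
  rw [h1, hswap]
  simp_rw [hinner]
  rw [MeasureTheory.restrict_Ico_eq_restrict_Ioc, ← intervalIntegral.integral_of_le zero_le_one]

lemma Ico_mul_disjoint {h : ℝ} (hp : 0 < h) {k k' : ℕ} (hkk : k ≠ k') :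
    Disjoint (Ico ((k:ℝ)*h) (((k:ℝ)+1)*h)) (Ico ((k':ℝ)*h) (((k':ℝ)+1)*h)) := by
  rw [Set.Ico_disjoint_Ico]
  rcases lt_or_gt_of_ne hkk with hlt | hlt
  · have : ((k:ℝ)+1) ≤ (k':ℝ) := by exact_mod_cast hlt
    calc min (((k:ℝ)+1)*h) (((k':ℝ)+1)*h) ≤ ((k:ℝ)+1)*h := min_le_left _ _
      _ ≤ (k':ℝ)*h := by nlinarith
      _ ≤ max ((k:ℝ)*h) ((k':ℝ)*h) := le_max_right _ _
  · have : ((k':ℝ)+1) ≤ (k:ℝ) := by exact_mod_cast hlt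
    calc min (((k:ℝ)+1)*h) (((k':ℝ)+1)*h) ≤ ((k':ℝ)+1)*h := min_le_right _ _
      _ ≤ (k:ℝ)*h := by nlinarith
      _ ≤ max ((k:ℝ)*h) ((k':ℝ)*h) := le_max_left _ _

lemma Ico_unit_eq_biUnion (N : ℕ) (h : ℝ) (hp : 0 < h) (e : (N:ℝ) * h = 1) (x : ℝ) :
    x ∈ Ico (0:ℝ) 1 ↔ ∃ k < N, x ∈ Ico ((k:ℝ)*h) (((k:ℝ)+1)*h) := by
  constructor
  · rintro ⟨hx0, hx1⟩
    refine ⟨⌊x / h⌋₊, ?_, ?_, ?_⟩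
    · rw [Nat.floor_lt (by positivity)]
      rw [div_lt_iff₀ hp]
      nlinarith
    · rw [← le_div_iff₀ hp]
      exact Nat.floor_le (by positivity)
    · rw [← div_lt_iff₀ hp]
      exact Nat.lt_floor_add_one _
  · rintro ⟨k, hk, hx1, hx2⟩
    constructor
    · have : (0:ℝ) ≤ (k:ℝ)*h := by positivity
      linarith
    · have : ((k:ℝ)+1) ≤ (N:ℝ) := by exact_mod_cast hk
      nlinarith

lemma key (N₁ N₂ : ℕ) (h₁ h₂ : ℝ) (hp₁ : 0 < h₁) (hp₂ : 0 < h₂)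
    (e₁ : (N₁ : ℝ) * h₁ = 1) (e₂ : (N₂ : ℝ) * h₂ = 1)
    (w : ℝ × ℝ → ℝ) (hw : ContDiff ℝ 1 w) (hwper : Periodic2 w)
    (Pw : ℝ × ℝ → ℝ) (hPw : IsInterpolant h₁ h₂ w Pw) :
    (∫ z in Omg, |fderiv ℝ Pw z (1, 0)|) ≤ ∫ z in Omg, |fderiv ℝ w z (1, 0)| := by
  obtain ⟨hPwc, hPwper, hPwbil, hPwnodal⟩ := hPw
  choose A B C D hcoef using hPwbil
  set F : ℝ × ℝ → ℝ := fun z => |fderiv ℝ Pw z (1, 0)| with hF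
  set S : ℕ × ℕ → Set (ℝ × ℝ) := fun p =>
    Ico ((p.1:ℝ)*h₁) (((p.1:ℝ)+1)*h₁) ×ˢ Ico ((p.2:ℝ)*h₂) (((p.2:ℝ)+1)*h₂) with hS
  have hcoef' : ∀ k l : ℕ, ∀ z ∈ Icc ((k:ℝ)*h₁) (((k:ℝ)+1)*h₁) ×ˢ Icc ((l:ℝ)*h₂) (((l:ℝ)+1)*h₂),
      Pw z = A k l + B k l * z.1 + C k l * z.2 + D k l * (z.1 * z.2) := by
    intro k l z hz
    apply hcoef (k:ℤ) (l:ℤ) z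
    unfold cell
    push_cast
    exact hz
  have hcb := fun k l : ℕ => cell_bound_s4 Pw (A k l) (B k l) (C k l) (D k l) _ _ _ _
    (by nlinarith : (k:ℝ)*h₁ < ((k:ℝ)+1)*h₁) (by nlinarith : (l:ℝ)*h₂ < ((l:ℝ)+1)*h₂)
    (hcoef' k l)
  -- corner identities
  set G : ℕ → ℤ → ℝ := fun k l =>
    |nodalAvg h₁ h₂ w ((k:ℤ) + 1) l - nodalAvg h₁ h₂ w (k:ℤ) l| with hG
  have hVA : ∀ k l : ℕ, h₁ * (B k l + D k l * ((l:ℝ)*h₂))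
      = nodalAvg h₁ h₂ w ((k:ℤ)+1) (l:ℤ) - nodalAvg h₁ h₂ w (k:ℤ) (l:ℤ) := by
    intro k l
    have c00 := hcoef' k l ((k:ℝ)*h₁, (l:ℝ)*h₂)
      (by simp only [Set.mem_prod, Set.mem_Icc]; refine ⟨⟨?_, ?_⟩, ?_, ?_⟩ <;> nlinarith)
    have c10 := hcoef' k l (((k:ℝ)+1)*h₁, (l:ℝ)*h₂)
      (by simp only [Set.mem_prod, Set.mem_Icc]; refine ⟨⟨?_, ?_⟩, ?_, ?_⟩ <;> nlinarith)
    have n00 : Pw ((k:ℝ)*h₁, (l:ℝ)*h₂) = nodalAvg h₁ h₂ w (k:ℤ) (l:ℤ) := by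
      have := hPwnodal (k:ℤ) (l:ℤ); push_cast at this; exact this
    have n10 : Pw (((k:ℝ)+1)*h₁, (l:ℝ)*h₂) = nodalAvg h₁ h₂ w ((k:ℤ)+1) (l:ℤ) := by
      have := hPwnodal ((k:ℤ)+1) (l:ℤ); push_cast at this; exact this
    simp only at c00 c10
    linear_combination c00 - c10 + n10 - n00
  have hVB : ∀ k l : ℕ, h₁ * (B k l + D k l * (((l:ℝ)+1)*h₂))
      = nodalAvg h₁ h₂ w ((k:ℤ)+1) ((l:ℤ)+1) - nodalAvg h₁ h₂ w (k:ℤ) ((l:ℤ)+1) := by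
    intro k l
    have c01 := hcoef' k l ((k:ℝ)*h₁, ((l:ℝ)+1)*h₂)
      (by simp only [Set.mem_prod, Set.mem_Icc]; refine ⟨⟨?_, ?_⟩, ?_, ?_⟩ <;> nlinarith)
    have c11 := hcoef' k l (((k:ℝ)+1)*h₁, ((l:ℝ)+1)*h₂)
      (by simp only [Set.mem_prod, Set.mem_Icc]; refine ⟨⟨?_, ?_⟩, ?_, ?_⟩ <;> nlinarith)
    have n01 : Pw ((k:ℝ)*h₁, ((l:ℝ)+1)*h₂) = nodalAvg h₁ h₂ w (k:ℤ) ((l:ℤ)+1) := by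
      have := hPwnodal (k:ℤ) ((l:ℤ)+1); push_cast at this; exact this
    have n11 : Pw (((k:ℝ)+1)*h₁, ((l:ℝ)+1)*h₂) = nodalAvg h₁ h₂ w ((k:ℤ)+1) ((l:ℤ)+1) := by
      have := hPwnodal ((k:ℤ)+1) ((l:ℤ)+1); push_cast at this; exact this
    simp only at c01 c11
    linear_combination c01 - c11 + n11 - n01
  -- per-cell bound in terms of G
  have hcell : ∀ k l : ℕ, (∫ z in S (k, l), F z) ≤ (h₂/2) * (G k l + G k ((l:ℤ)+1)) := by
    intro k l
    have h2 := (hcb k l).2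
    have hfx : (((k:ℝ)+1)*h₁ - (k:ℝ)*h₁) = h₁ := by ring
    have hfy : ((((l:ℝ)+1)*h₂ - (l:ℝ)*h₂)/2) = h₂/2 := by ring
    rw [hfx, hfy] at h2
    calc (∫ z in S (k, l), F z)
        ≤ h₁ * (h₂/2) * (|B k l + D k l * ((l:ℝ)*h₂)| + |B k l + D k l * (((l:ℝ)+1)*h₂)|) := h2
      _ = (h₂/2) * (|h₁ * (B k l + D k l * ((l:ℝ)*h₂))| + |h₁ * (B k l + D k l * (((l:ℝ)+1)*h₂))|) := by
          rw [abs_mul, abs_mul, abs_of_pos hp₁]; ring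
      _ = (h₂/2) * (G k l + G k ((l:ℤ)+1)) := by rw [hVA, hVB, hG]
  -- periodicity of nodalAvg in l
  have nodalper : ∀ j : ℤ, nodalAvg h₁ h₂ w j (N₂:ℤ) = nodalAvg h₁ h₂ w j 0 := by
    intro j
    unfold nodalAvg
    congr 1
    apply MeasureTheory.integral_congr_ae
    filter_upwards with ζ
    have h1 : ((N₂:ℤ):ℝ) * h₂ + ζ.2 = ((j:ℝ)*h₁ + ζ.1, ζ.2).2 + 1 := by push_cast; rw [← e₂]; ring
    rw [h1, hwper.2 ((j:ℝ)*h₁ + ζ.1, ζ.2)]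
    norm_num
  have hGper : ∀ k : ℕ, G k (N₂:ℤ) = G k 0 := by
    intro k; rw [hG]; simp only [nodalper]
  have shift : ∀ k : ℕ, ∑ l ∈ Finset.range N₂, G k ((l:ℤ)+1) = ∑ l ∈ Finset.range N₂, G k (l:ℤ) := by
    intro k
    have h1 : ∑ l ∈ Finset.range N₂, G k ((l:ℤ)+1)
        = ∑ l ∈ Finset.range N₂, (fun l : ℕ => G k (l:ℤ)) (l+1) :=
      Finset.sum_congr rfl fun l _ => by push_cast; rfl
    have h2 := Finset.sum_range_succ' (fun l : ℕ => G k (l:ℤ)) N₂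
    have h3 := Finset.sum_range_succ (fun l : ℕ => G k (l:ℤ)) N₂
    have h4 : G k ((N₂:ℕ):ℤ) = G k ((0:ℕ):ℤ) := by exact_mod_cast hGper k
    rw [h1]
    have := h2.symm.trans h3
    simp only at this ⊢
    linarith [this, h4]
  -- decomposition of Omg
  have hOmg : Omg = ⋃ p ∈ Finset.range N₁ ×ˢ Finset.range N₂, S p := by
    ext z
    simp only [Omg, mem_prod, mem_iUnion, Finset.mem_product, Finset.mem_range, exists_prop, hS]
    constructor
    · rintro ⟨hz1, hz2⟩
      obtain ⟨k, hk, hxk⟩ := (Ico_unit_eq_biUnion N₁ h₁ hp₁ e₁ z.1).1 hz1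
      obtain ⟨l, hl, hyl⟩ := (Ico_unit_eq_biUnion N₂ h₂ hp₂ e₂ z.2).1 hz2
      exact ⟨(k, l), ⟨hk, hl⟩, hxk, hyl⟩
    · rintro ⟨p, ⟨hk, hl⟩, hx, hy⟩
      exact ⟨(Ico_unit_eq_biUnion N₁ h₁ hp₁ e₁ z.1).2 ⟨p.1, hk, hx⟩,
        (Ico_unit_eq_biUnion N₂ h₂ hp₂ e₂ z.2).2 ⟨p.2, hl, hy⟩⟩
  have hdecomp : (∫ z in Omg, F z) = ∑ p ∈ Finset.range N₁ ×ˢ Finset.range N₂, ∫ z in S p, F z := by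
    rw [hOmg]
    apply MeasureTheory.integral_biUnion_finset
    · exact fun p _ => measurableSet_Ico.prod measurableSet_Ico
    · intro p hp q hq hpq
      rcases Prod.ext_iff.not.mp hpq with h
      simp only [not_and_or] at h
      rw [Function.onFun, hS]
      rcases (by tauto : p.1 ≠ q.1 ∨ p.2 ≠ q.2) with h' | h'
      · exact Set.disjoint_prod.mpr (Or.inl (Ico_mul_disjoint hp₁ h'))
      · exact Set.disjoint_prod.mpr (Or.inr (Ico_mul_disjoint hp₂ h'))
    · exact fun p _ => (hcb p.1 p.2).1
  -- main chain
  calc (∫ z in Omg, F z)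
      = ∑ p ∈ Finset.range N₁ ×ˢ Finset.range N₂, ∫ z in S p, F z := hdecomp
    _ ≤ ∑ p ∈ Finset.range N₁ ×ˢ Finset.range N₂, (h₂/2) * (G p.1 p.2 + G p.1 ((p.2:ℤ)+1)) :=
        Finset.sum_le_sum fun p _ => hcell p.1 p.2
    _ = ∑ k ∈ Finset.range N₁, ∑ l ∈ Finset.range N₂, (h₂/2) * (G k l + G k ((l:ℤ)+1)) := by
        rw [Finset.sum_product]
    _ = ∑ k ∈ Finset.range N₁, h₂ * ∑ l ∈ Finset.range N₂, G k l := by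
        apply Finset.sum_congr rfl
        intro k _
        have hsplit : ∑ l ∈ Finset.range N₂, (h₂/2) * (G k l + G k ((l:ℤ)+1))
            = (h₂/2) * (∑ l ∈ Finset.range N₂, G k l)
              + (h₂/2) * (∑ l ∈ Finset.range N₂, G k ((l:ℤ)+1)) := by
          rw [← mul_add, ← Finset.sum_add_distrib, ← Finset.mul_sum]
        rw [hsplit, shift k]
        ring
    _ = h₂ * ∑ l ∈ Finset.range N₂, ∑ k ∈ Finset.range N₁, G k l := by
        rw [← Finset.mul_sum]
        congr 1
        exact Finset.sum_comm
    _ ≤ h₂ * ∑ l ∈ Finset.range N₂, h₂⁻¹ *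
          ∫ t in ((l:ℝ) * h₂ - h₂ / 2)..((l:ℝ) * h₂ + h₂ / 2), gOne w t := by
        apply mul_le_mul_of_nonneg_left _ hp₂.le
        apply Finset.sum_le_sum
        intro l _
        have := row_bound w hw hwper.1 N₁ h₁ h₂ hp₁ hp₂ e₁ (l:ℤ)
        rw [hG]
        simpa only [Int.cast_natCast] using this
    _ = ∑ l ∈ Finset.range N₂, ∫ t in ((l:ℝ) * h₂ - h₂ / 2)..((l:ℝ) * h₂ + h₂ / 2), gOne w t := by
        rw [Finset.mul_sum]
        apply Finset.sum_congr rfl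
        intro l _
        rw [← mul_assoc, mul_inv_cancel₀ hp₂.ne', one_mul]
    _ = ∫ y in (0:ℝ)..1, gOne w y := col_sum w hw hwper.2 N₂ h₂ hp₂ e₂
    _ = ∫ z in Omg, |fderiv ℝ w z (1, 0)| := fubini_gOne w hw

lemma swap_setIntegral (f : ℝ × ℝ → ℝ) (s t : Set ℝ) :
    (∫ z in t ×ˢ s, f (Prod.swap z)) = ∫ z in s ×ˢ t, f z := by
  have hmp : MeasurePreserving (Prod.swap : ℝ × ℝ → ℝ × ℝ) volume volume := by
    rw [Measure.volume_eq_prod]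
    exact Measure.measurePreserving_swap
  have h := hmp.setIntegral_image_emb (MeasurableEquiv.prodComm (α := ℝ) (β := ℝ)).measurableEmbedding f (t ×ˢ s)
  rw [← h, Set.image_swap_prod]

lemma fderiv_comp_swap (f : ℝ × ℝ → ℝ) (z v : ℝ × ℝ) :
    fderiv ℝ (fun p : ℝ × ℝ => f (p.2, p.1)) z v = fderiv ℝ f (z.2, z.1) (v.2, v.1) := by
  have h := ContinuousLinearEquiv.comp_right_fderiv
    (iso := ContinuousLinearEquiv.prodComm ℝ ℝ ℝ) (f := f) (x := z)
  have h2 : (f ∘ ⇑(ContinuousLinearEquiv.prodComm ℝ ℝ ℝ)) = fun p : ℝ × ℝ => f (p.2, p.1) := rfl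
  rw [h2] at h
  rw [h]
  rfl

lemma interp_swap (h₁ h₂ : ℝ) (w Pw : ℝ × ℝ → ℝ) (hPw : IsInterpolant h₁ h₂ w Pw) :
    IsInterpolant h₂ h₁ (fun p : ℝ × ℝ => w (p.2, p.1)) (fun p : ℝ × ℝ => Pw (p.2, p.1)) := by
  obtain ⟨hc, hper, hbil, hnodal⟩ := hPw
  refine ⟨by fun_prop, ⟨fun z => hper.2 (z.2, z.1), fun z => hper.1 (z.2, z.1)⟩, ?_, ?_⟩
  · intro k l
    obtain ⟨a, b, c, d, hh⟩ := hbil l k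
    refine ⟨a, c, b, d, fun z hz => ?_⟩
    have hmem : ((z.2, z.1) : ℝ × ℝ) ∈ cell h₁ h₂ l k := ⟨hz.2, hz.1⟩
    have := hh (z.2, z.1) hmem
    simp only at this
    linear_combination this
  · intro k l
    have h1 : (fun p : ℝ × ℝ => Pw (p.2, p.1)) ((k : ℝ) * h₂, (l : ℝ) * h₁)
        = Pw ((l : ℝ) * h₁, (k : ℝ) * h₂) := rfl
    rw [h1, hnodal l k]
    unfold nodalAvg
    rw [show (h₁ * h₂)⁻¹ = (h₂ * h₁)⁻¹ by rw [mul_comm]]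
    congr 1
    have h2 : ∀ ζ : ℝ × ℝ, w ((l : ℝ) * h₁ + ζ.1, (k : ℝ) * h₂ + ζ.2)
        = (fun ζ : ℝ × ℝ => (fun p : ℝ × ℝ => w (p.2, p.1)) ((k : ℝ) * h₂ + ζ.1, (l : ℝ) * h₁ + ζ.2))
          (Prod.swap ζ) := fun ζ => rfl
    calc (∫ ζ in Qset h₁ h₂, w ((l : ℝ) * h₁ + ζ.1, (k : ℝ) * h₂ + ζ.2))
        = ∫ ζ in Icc (-(h₁/2)) (h₁/2) ×ˢ Icc (-(h₂/2)) (h₂/2),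
            (fun ζ : ℝ × ℝ => (fun p : ℝ × ℝ => w (p.2, p.1)) ((k : ℝ) * h₂ + ζ.1, (l : ℝ) * h₁ + ζ.2))
            (Prod.swap ζ) := by rw [Qset]; exact integral_congr_ae (by filter_upwards with ζ; rw [h2])
      _ = ∫ ζ in Icc (-(h₂/2)) (h₂/2) ×ˢ Icc (-(h₁/2)) (h₁/2),
            (fun p : ℝ × ℝ => w (p.2, p.1)) ((k : ℝ) * h₂ + ζ.1, (l : ℝ) * h₁ + ζ.2) := by
          exact swap_setIntegral
            (fun ζ : ℝ × ℝ => (fun p : ℝ × ℝ => w (p.2, p.1)) ((k : ℝ) * h₂ + ζ.1, (l : ℝ) * h₁ + ζ.2)) _ _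
      _ = ∫ ζ in Qset h₂ h₁, (fun p : ℝ × ℝ => w (p.2, p.1)) ((k : ℝ) * h₂ + ζ.1, (l : ℝ) * h₁ + ζ.2) := by
          rw [Qset]


/-- `Π_h` does not increase each directional total variation,
for `C¹` periodic functions. -/
theorem stmt4 (N₁ N₂ : ℕ) (hN₁ : 0 < N₁) (hN₂ : 0 < N₂) (h₁ h₂ : ℝ)
    (hh₁ : h₁ = 1 / N₁) (hh₂ : h₂ = 1 / N₂)
    (w : ℝ × ℝ → ℝ) (hw : ContDiff ℝ 1 w) (hwper : Periodic2 w)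
    (Pw : ℝ × ℝ → ℝ) (hPw : IsInterpolant h₁ h₂ w Pw) :
    ((∫ z in Omg, |fderiv ℝ Pw z (1, 0)|) ≤ ∫ z in Omg, |fderiv ℝ w z (1, 0)|) ∧
      (∫ z in Omg, |fderiv ℝ Pw z (0, 1)|) ≤ ∫ z in Omg, |fderiv ℝ w z (0, 1)| := by
  have hN₁' : (0:ℝ) < N₁ := by exact_mod_cast hN₁
  have hN₂' : (0:ℝ) < N₂ := by exact_mod_cast hN₂
  have hp₁ : 0 < h₁ := by rw [hh₁]; positivity
  have hp₂ : 0 < h₂ := by rw [hh₂]; positivity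
  have e₁ : (N₁ : ℝ) * h₁ = 1 := by rw [hh₁]; field_simp
  have e₂ : (N₂ : ℝ) * h₂ = 1 := by rw [hh₂]; field_simp
  constructor
  · exact key N₁ N₂ h₁ h₂ hp₁ hp₂ e₁ e₂ w hw hwper Pw hPw
  · have hw' : ContDiff ℝ 1 (fun p : ℝ × ℝ => w (p.2, p.1)) :=
      hw.comp (ContinuousLinearEquiv.prodComm ℝ ℝ ℝ).contDiff
    have hwper' : Periodic2 (fun p : ℝ × ℝ => w (p.2, p.1)) :=
      ⟨fun z => hwper.2 (z.2, z.1), fun z => hwper.1 (z.2, z.1)⟩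
    have hk := key N₂ N₁ h₂ h₁ hp₂ hp₁ e₂ e₁ _ hw' hwper' _ (interp_swap h₁ h₂ w Pw hPw)
    have lhs_eq : (∫ z in Omg, |fderiv ℝ (fun p : ℝ × ℝ => Pw (p.2, p.1)) z (1, 0)|)
        = ∫ z in Omg, |fderiv ℝ Pw z (0, 1)| := by
      have hpt : ∀ z : ℝ × ℝ, |fderiv ℝ (fun p : ℝ × ℝ => Pw (p.2, p.1)) z (1, 0)|
          = (fun z : ℝ × ℝ => |fderiv ℝ Pw z (0, 1)|) (Prod.swap z) := by
        intro z
        rw [fderiv_comp_swap]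
        rfl
      calc (∫ z in Omg, |fderiv ℝ (fun p : ℝ × ℝ => Pw (p.2, p.1)) z (1, 0)|)
          = ∫ z in Ico (0:ℝ) 1 ×ˢ Ico (0:ℝ) 1,
              (fun z : ℝ × ℝ => |fderiv ℝ Pw z (0, 1)|) (Prod.swap z) := by
            rw [Omg] at *
            exact integral_congr_ae (by filter_upwards with z; rw [hpt])
        _ = ∫ z in Omg, |fderiv ℝ Pw z (0, 1)| := by
            rw [Omg]
            exact swap_setIntegral (fun z : ℝ × ℝ => |fderiv ℝ Pw z (0, 1)|) _ _
    have rhs_eq : (∫ z in Omg, |fderiv ℝ (fun p : ℝ × ℝ => w (p.2, p.1)) z (1, 0)|)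
        = ∫ z in Omg, |fderiv ℝ w z (0, 1)| := by
      have hpt : ∀ z : ℝ × ℝ, |fderiv ℝ (fun p : ℝ × ℝ => w (p.2, p.1)) z (1, 0)|
          = (fun z : ℝ × ℝ => |fderiv ℝ w z (0, 1)|) (Prod.swap z) := by
        intro z
        rw [fderiv_comp_swap]
        rfl
      calc (∫ z in Omg, |fderiv ℝ (fun p : ℝ × ℝ => w (p.2, p.1)) z (1, 0)|)
          = ∫ z in Ico (0:ℝ) 1 ×ˢ Ico (0:ℝ) 1,
              (fun z : ℝ × ℝ => |fderiv ℝ w z (0, 1)|) (Prod.swap z) := by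
            rw [Omg] at *
            exact integral_congr_ae (by filter_upwards with z; rw [hpt])
        _ = ∫ z in Omg, |fderiv ℝ w z (0, 1)| := by
            rw [Omg]
            exact swap_setIntegral (fun z : ℝ × ℝ => |fderiv ℝ w z (0, 1)|) _ _
    rw [← lhs_eq, ← rhs_eq]
    exact hk
end
end

section
/- For every p with 1 ≤ p ≤ ∞ and every w ∈ L^p(Ω) with Ω = (0,1)², the boundary-corrected interpolant satisfies ‖𝒞_h w‖_{L^p(Ω)} ≤ ‖w‖_{L^p(Ω)}. -/
open MeasureTheory Set
open scoped ENNReal NNReal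

noncomputable section

/-- The open unit square `Ω = (0,1)²`. -/
def OmgO : Set (ℝ × ℝ) := Ioo (0 : ℝ) 1 ×ˢ Ioo (0 : ℝ) 1

/-- The closed unit square `Ω̄ = [0,1]²`. -/
def sqC : Set (ℝ × ℝ) := Icc (0 : ℝ) 1 ×ˢ Icc (0 : ℝ) 1

/-- The Euclidean norm of the gradient of `w`. -/
def gradNorm (w : ℝ × ℝ → ℝ) (z : ℝ × ℝ) : ℝ :=
  Real.sqrt ((fderiv ℝ w z (1, 0)) ^ 2 + (fderiv ℝ w z (0, 1)) ^ 2)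

/-- `Q_Ω(k,l) = (z_{k,l} + Q) ∩ Ω`. -/
def QOmg (h₁ h₂ : ℝ) (k l : ℤ) : Set (ℝ × ℝ) :=
  (Icc ((k : ℝ) * h₁ - h₁ / 2) ((k : ℝ) * h₁ + h₁ / 2) ×ˢ
    Icc ((l : ℝ) * h₂ - h₂ / 2) ((l : ℝ) * h₂ + h₂ / 2)) ∩ OmgO

/-- `Ch` is the boundary-corrected interpolant `𝒞_h w` on `Ω̄ = [0,1]²`:
continuous on `Ω̄`, bilinear on each cell, with nodal values equal to the average
of `w` over `Q_Ω(k,l)`. -/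
def IsCInterp (N₁ N₂ : ℕ) (h₁ h₂ : ℝ) (w Ch : ℝ × ℝ → ℝ) : Prop :=
  ContinuousOn Ch sqC ∧
    (∀ k l : ℕ, k < N₁ → l < N₂ → IsBilinearOn Ch (cell h₁ h₂ k l)) ∧
    ∀ k l : ℕ, k ≤ N₁ → l ≤ N₂ →
      Ch ((k : ℝ) * h₁, (l : ℝ) * h₂) =
        (volume (QOmg h₁ h₂ k l)).toReal⁻¹ * ∫ y in QOmg h₁ h₂ (k : ℤ) (l : ℤ), w y

-- 1D reindexing lemma
lemma sum1d (N : ℕ) (hN : 0 < N) (F : ℕ → ℝ≥0∞) :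
    ∑ k ∈ Finset.range N, (F k + F (k+1)) =
    ∑ k ∈ Finset.range (N+1), (if k = 0 ∨ k = N then 1 else 2) * F k := by
  induction N with
  | zero => omega
  | succ n ih =>
    rcases Nat.eq_zero_or_pos n with hn | hn
    · subst hn; simp [Finset.sum_range_succ]
    · rw [Finset.sum_range_succ, ih hn]
      rw [Finset.sum_range_succ (n := n+1), Finset.sum_range_succ (n := n)]
      rw [Finset.sum_range_succ (n := n)]
      have h1 : ∀ k ∈ Finset.range n, (if k = 0 ∨ k = n+1 then (1:ℝ≥0∞) else 2) * F k
          = (if k = 0 ∨ k = n then 1 else 2) * F k := by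
        intro k hk
        simp only [Finset.mem_range] at hk
        have : (k = 0 ∨ k = n+1) ↔ (k = 0 ∨ k = n) := by omega
        simp only [this]
      rw [Finset.sum_congr rfl h1]
      have h2 : (if n = 0 ∨ n = n then (1:ℝ≥0∞) else 2) = 1 := by simp
      have h3 : (if n+1 = 0 ∨ n+1 = n+1 then (1:ℝ≥0∞) else 2) = 1 := by simp
      have h4 : (if n = 0 ∨ n = n+1 then (1:ℝ≥0∞) else 2) = 2 := by
        rw [if_neg]; omega
      rw [h2, h3, h4]
      ring

def slab (h : ℝ) (k : ℕ) : Set ℝ := Icc (k*h - h/2) (k*h + h/2) ∩ Ioo 0 1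

lemma volume_slab (N : ℕ) (hN : 0 < N) (h : ℝ) (hh : h = 1/N) (k : ℕ) (hk : k ≤ N) :
    volume (slab h k) = ENNReal.ofReal (if k = 0 ∨ k = N then h/2 else h) := by
  have hNpos : (0:ℝ) < N := by exact_mod_cast hN
  have hpos : 0 < h := by rw [hh]; positivity
  have hNh : (N:ℝ) * h = 1 := by rw [hh]; field_simp
  have hle1 : h ≤ 1 := by
    rw [hh, div_le_one hNpos]; exact_mod_cast hN
  rcases eq_or_ne k 0 with rfl | hk0
  · have hs : slab h 0 = Ioc 0 (h/2) := by
      ext x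
      simp only [slab, Set.mem_inter_iff, Set.mem_Icc, Set.mem_Ioo, Set.mem_Ioc, Nat.cast_zero]
      constructor
      · rintro ⟨⟨_, h2⟩, h3, _⟩; constructor <;> linarith
      · rintro ⟨h1, h2⟩; refine ⟨⟨by linarith, by linarith⟩, h1, by linarith⟩
    rw [hs, Real.volume_Ioc, if_pos (Or.inl rfl)]; norm_num
  rcases eq_or_ne k N with hkN | hkN
  · have hkr : (k:ℝ) = N := by exact_mod_cast hkN
    have hs : slab h k = Ico (1 - h/2) 1 := by
      ext x
      simp only [slab, Set.mem_inter_iff, Set.mem_Icc, Set.mem_Ioo, Set.mem_Ico, hkr]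
      constructor
      · rintro ⟨⟨h1, _⟩, _, h4⟩; exact ⟨by linarith, h4⟩
      · rintro ⟨h1, h2⟩; refine ⟨⟨by linarith, by linarith⟩, by linarith, h2⟩
    rw [hs, Real.volume_Ico, if_pos (Or.inr hkN)]; norm_num
  · have hk1 : 1 ≤ k := Nat.one_le_iff_ne_zero.mpr hk0
    have hkr : (k:ℝ) ≥ 1 := by exact_mod_cast hk1
    have hkr2 : (k:ℝ) + 1 ≤ N := by
      have : k + 1 ≤ N := by omega
      exact_mod_cast this
    have hs : slab h k = Icc (k*h - h/2) (k*h + h/2) := by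
      apply Set.inter_eq_left.mpr
      intro x hx
      simp only [Set.mem_Icc] at hx
      simp only [Set.mem_Ioo]
      constructor
      · nlinarith [hx.1]
      · nlinarith [hx.2]
    rw [hs, Real.volume_Icc, if_neg (by tauto)]; congr 1; ring

lemma slab_disj (h : ℝ) (hpos : 0 < h) (k k' : ℕ) (hkk : k ≠ k') :
    volume (slab h k ∩ slab h k') = 0 := by
  wlog hlt : k < k' generalizing k k'
  · rw [Set.inter_comm]; exact this k' k hkk.symm (by omega)
  refine measure_mono_null (fun x hx => ?_)
    (show volume (Icc ((k':ℝ)*h - h/2) ((k:ℝ)*h + h/2)) = 0 from ?_)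
  · exact ⟨hx.2.1.1, hx.1.1.2⟩
  · rw [Real.volume_Icc, ENNReal.ofReal_eq_zero]
    have : (k:ℝ) + 1 ≤ k' := by exact_mod_cast hlt
    nlinarith

lemma hNh_aux (N : ℕ) (hN : 0 < N) (h : ℝ) (hh : h = 1/N) : (N:ℝ) * h = 1 := by
  have hNpos : (0:ℝ) < N := by exact_mod_cast hN
  rw [hh]; field_simp

lemma slab_cover (N : ℕ) (hN : 0 < N) (h : ℝ) (hh : h = 1/N) :
    Ioo (0:ℝ) 1 ⊆ ⋃ k ∈ Finset.range (N+1), slab h k := by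
  intro x hx
  have hNpos : (0:ℝ) < N := by exact_mod_cast hN
  have hpos : 0 < h := by rw [hh]; positivity
  set k : ℤ := ⌊x/h + 1/2⌋ with hkdef
  have hk0 : 0 ≤ k := by
    apply Int.le_floor.mpr; push_cast
    have : 0 < x / h := div_pos hx.1 hpos
    linarith
  have hfl : (k:ℝ) ≤ x/h + 1/2 := Int.floor_le _
  have hfl2 : x/h + 1/2 < k + 1 := Int.lt_floor_add_one _
  have hxh : x / h < N := by
    rw [div_lt_iff₀ hpos]
    nlinarith [hx.2, hNh_aux N hN h hh]
  have hkN : k ≤ N := by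
    by_contra hcon
    push_neg at hcon
    have : (N:ℝ) + 1 ≤ (k:ℝ) := by exact_mod_cast hcon
    linarith
  set kn := k.toNat with hkn
  have hknk : (kn : ℝ) = (k : ℝ) := by exact_mod_cast Int.toNat_of_nonneg hk0
  have hknN : kn < N + 1 := by omega
  refine Set.mem_biUnion (Finset.mem_range.mpr hknN) ?_
  refine ⟨?_, hx⟩
  simp only [Set.mem_Icc, hknk]
  have hx1 : (k:ℝ) * h ≤ x + h/2 := by
    have := mul_le_mul_of_nonneg_right hfl (le_of_lt hpos)
    calc (k:ℝ) * h ≤ (x/h + 1/2) * h := this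
    _ = x + h/2 := by field_simp
  have hx2 : x - h/2 ≤ (k:ℝ) * h := by
    have := mul_le_mul_of_nonneg_right (le_of_lt hfl2) (le_of_lt hpos)
    have h2 : (x/h + 1/2) * h = x + h/2 := by field_simp
    nlinarith
  constructor <;> linarith

lemma cell_cover (N : ℕ) (hN : 0 < N) (h : ℝ) (hh : h = 1/N) :
    Ioo (0:ℝ) 1 ⊆ ⋃ k ∈ Finset.range N, Icc ((k:ℝ)*h) (((k:ℝ)+1)*h) := by
  intro x hx
  have hNpos : (0:ℝ) < N := by exact_mod_cast hN
  have hpos : 0 < h := by rw [hh]; positivity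
  set k : ℤ := ⌊x/h⌋ with hkdef
  have hk0 : 0 ≤ k := Int.floor_nonneg.mpr (le_of_lt (div_pos hx.1 hpos))
  have hfl : (k:ℝ) ≤ x/h := Int.floor_le _
  have hfl2 : x/h < k + 1 := Int.lt_floor_add_one _
  have hxh : x / h < N := by
    rw [div_lt_iff₀ hpos]
    nlinarith [hx.2, hNh_aux N hN h hh]
  have hkN : k < N := by
    by_contra hcon
    push_neg at hcon
    have : (N:ℝ) ≤ (k:ℝ) := by exact_mod_cast hcon
    linarith
  set kn := k.toNat with hkn
  have hknk : (kn : ℝ) = (k : ℝ) := by exact_mod_cast Int.toNat_of_nonneg hk0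
  have hknN : kn < N := by omega
  refine Set.mem_biUnion (Finset.mem_range.mpr hknN) ?_
  simp only [Set.mem_Icc, hknk]
  constructor
  · calc (k:ℝ) * h ≤ (x/h) * h := by nlinarith
    _ = x := by field_simp
  · have : x = (x/h) * h := by field_simp
    nlinarith

lemma integral_left (a b : ℝ) (hab : a ≤ b) :
    ∫ x in Icc a b, (b - x) = (b-a)^2/2 := by
  rw [MeasureTheory.integral_Icc_eq_integral_Ioc, ← intervalIntegral.integral_of_le hab]
  have : ∫ x in a..b, (b - x) = (∫ x in a..b, (b:ℝ)) - ∫ x in a..b, x := by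
    rw [← intervalIntegral.integral_sub intervalIntegrable_const intervalIntegral.intervalIntegrable_id]
  rw [this, intervalIntegral.integral_const, integral_id]
  simp only [smul_eq_mul]; ring

lemma integral_right (a b : ℝ) (hab : a ≤ b) :
    ∫ x in Icc a b, (x - a) = (b-a)^2/2 := by
  rw [MeasureTheory.integral_Icc_eq_integral_Ioc, ← intervalIntegral.integral_of_le hab]
  have : ∫ x in a..b, (x - a) = (∫ x in a..b, x) - ∫ x in a..b, (a:ℝ) := by
    rw [← intervalIntegral.integral_sub intervalIntegral.intervalIntegrable_id intervalIntegrable_const]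
  rw [this, intervalIntegral.integral_const, integral_id]
  simp only [smul_eq_mul]; ring

lemma jensen4 {q : ℝ} (hq : 1 ≤ q) (a₁ a₂ a₃ a₄ t₁ t₂ t₃ t₄ : ℝ)
    (ha₁ : 0 ≤ a₁) (ha₂ : 0 ≤ a₂) (ha₃ : 0 ≤ a₃) (ha₄ : 0 ≤ a₄)
    (hsum : a₁ + a₂ + a₃ + a₄ = 1)
    (ht₁ : 0 ≤ t₁) (ht₂ : 0 ≤ t₂) (ht₃ : 0 ≤ t₃) (ht₄ : 0 ≤ t₄) :
    (a₁*t₁ + a₂*t₂ + a₃*t₃ + a₄*t₄) ^ q ≤ a₁*t₁^q + a₂*t₂^q + a₃*t₃^q + a₄*t₄^q := by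
  have := Real.rpow_arith_mean_le_arith_mean_rpow (Finset.univ : Finset (Fin 4))
    ![a₁, a₂, a₃, a₄] ![t₁, t₂, t₃, t₄]
    (by intro i _; fin_cases i <;> assumption)
    (by simp [Fin.sum_univ_four, hsum])
    (by intro i _; fin_cases i <;> assumption) hq
  simpa [Fin.sum_univ_four] using this

lemma bilin_rep (a b c d x0 x1 y0 y1 x y : ℝ) (hx : x0 < x1) (hy : y0 < y1) :
    a + b*x + c*y + d*(x*y) =
      (((x1 - x)/(x1 - x0)) * ((y1 - y)/(y1 - y0))) * (a + b*x0 + c*y0 + d*(x0*y0))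
    + (((x - x0)/(x1 - x0)) * ((y1 - y)/(y1 - y0))) * (a + b*x1 + c*y0 + d*(x1*y0))
    + (((x1 - x)/(x1 - x0)) * ((y - y0)/(y1 - y0))) * (a + b*x0 + c*y1 + d*(x0*y1))
    + (((x - x0)/(x1 - x0)) * ((y - y0)/(y1 - y0))) * (a + b*x1 + c*y1 + d*(x1*y1)) := by
  have h1 : x1 - x0 ≠ 0 := by linarith
  have h2 : y1 - y0 ≠ 0 := by linarith
  field_simp
  ring

lemma lint_left (a b h : ℝ) (hab : a ≤ b) (hpos : 0 < h) :
    ∫⁻ x in Icc a b, ENNReal.ofReal ((b - x)/h) = ENNReal.ofReal ((b-a)^2/(2*h)) := by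
  rw [← MeasureTheory.ofReal_integral_eq_lintegral_ofReal]
  · congr 1
    rw [MeasureTheory.integral_div, integral_left a b hab]
    ring
  · exact ((continuous_const.sub continuous_id).div_const h).integrableOn_Icc
  · refine (MeasureTheory.ae_restrict_iff' measurableSet_Icc).mpr (MeasureTheory.ae_of_all _ ?_)
    intro x hx
    exact div_nonneg (by linarith [hx.2]) hpos.le
  
lemma lint_right (a b h : ℝ) (hab : a ≤ b) (hpos : 0 < h) :
    ∫⁻ x in Icc a b, ENNReal.ofReal ((x - a)/h) = ENNReal.ofReal ((b-a)^2/(2*h)) := by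
  rw [← MeasureTheory.ofReal_integral_eq_lintegral_ofReal]
  · congr 1
    rw [MeasureTheory.integral_div, integral_right a b hab]
    ring
  · exact ((continuous_id.sub continuous_const).div_const h).integrableOn_Icc
  · refine (MeasureTheory.ae_restrict_iff' measurableSet_Icc).mpr (MeasureTheory.ae_of_all _ ?_)
    intro x hx
    exact div_nonneg (by linarith [hx.1]) hpos.le

lemma lint_prod_split (s t : Set ℝ) (hs : MeasurableSet s) (ht : MeasurableSet t)
    (U V : ℝ → ℝ) (hU : Measurable U) (hV : Measurable V) :
    ∫⁻ z in s ×ˢ t, ENNReal.ofReal (U z.1) * ENNReal.ofReal (V z.2) =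
      (∫⁻ x in s, ENNReal.ofReal (U x)) * (∫⁻ y in t, ENNReal.ofReal (V y)) := by
  rw [MeasureTheory.Measure.volume_eq_prod, ← MeasureTheory.Measure.prod_restrict s t]
  exact MeasureTheory.lintegral_prod_mul hU.ennreal_ofReal.aemeasurable
    hV.ennreal_ofReal.aemeasurable

lemma node_bound (q : ℝ) (hq : 1 ≤ q) (w : ℝ × ℝ → ℝ) (S : Set (ℝ × ℝ))
    (hS : MeasurableSet S) (hne : volume S ≠ 0) (hfin : volume S ≠ ⊤)
    (hw1 : MeasureTheory.IntegrableOn w S)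
    (hwq : MeasureTheory.IntegrableOn (fun z => |w z| ^ q) S) :
    ENNReal.ofReal (|(volume S).toReal⁻¹ * ∫ y in S, w y| ^ q) * volume S ≤
      ∫⁻ y in S, ENNReal.ofReal (|w y| ^ q) := by
  have hq0 : 0 < q := lt_of_lt_of_le zero_lt_one hq
  set μt := (volume S).toReal with hμt
  have hμtpos : 0 < μt := ENNReal.toReal_pos hne hfin
  haveI : MeasureTheory.IsFiniteMeasure (volume.restrict S) :=
    ⟨by rw [MeasureTheory.Measure.restrict_apply_univ]; exact hfin.lt_top⟩
  haveI : NeZero (volume.restrict S) :=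
    ⟨by rw [Ne, MeasureTheory.Measure.restrict_eq_zero]; exact hne⟩
  -- step 1
  have step1 : |μt⁻¹ * ∫ y in S, w y| ≤ μt⁻¹ * ∫ y in S, |w y| := by
    rw [abs_mul, abs_of_nonneg (inv_nonneg.mpr hμtpos.le)]
    apply mul_le_mul_of_nonneg_left _ (inv_nonneg.mpr hμtpos.le)
    simpa [Real.norm_eq_abs] using
      MeasureTheory.norm_integral_le_integral_norm (μ := volume.restrict S) w
  -- step 2 (Jensen)
  have hgc : ContinuousOn (fun x : ℝ => x ^ q) (Ici 0) :=
    fun x _ => (Real.continuousAt_rpow_const x q (Or.inr hq0.le)).continuousWithinAt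
  have jensen := (convexOn_rpow hq).map_average_le hgc isClosed_Ici
    (MeasureTheory.ae_of_all _ fun y => abs_nonneg (w y)) hw1.abs (by exact hwq)
  rw [MeasureTheory.average_eq, MeasureTheory.average_eq,
    MeasureTheory.measureReal_restrict_apply_univ] at jensen
  simp only [smul_eq_mul] at jensen
  -- step 3
  have step3 : |μt⁻¹ * ∫ y in S, w y| ^ q ≤ μt⁻¹ * ∫ y in S, |w y| ^ q := by
    calc |μt⁻¹ * ∫ y in S, w y| ^ q ≤ (μt⁻¹ * ∫ y in S, |w y|) ^ q :=
          Real.rpow_le_rpow (abs_nonneg _) step1 hq0.le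
    _ ≤ μt⁻¹ * ∫ y in S, |w y| ^ q := jensen
  -- step 4
  rw [← MeasureTheory.ofReal_integral_eq_lintegral_ofReal hwq
    (MeasureTheory.ae_of_all _ fun y => Real.rpow_nonneg (abs_nonneg _) q)]
  calc ENNReal.ofReal (|μt⁻¹ * ∫ y in S, w y| ^ q) * volume S
      = ENNReal.ofReal (|μt⁻¹ * ∫ y in S, w y| ^ q * μt) := by
        rw [← ENNReal.ofReal_toReal hfin, ← hμt,
          ENNReal.ofReal_mul (Real.rpow_nonneg (abs_nonneg _) q)]
    _ ≤ ENNReal.ofReal (∫ y in S, |w y| ^ q) := by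
        apply ENNReal.ofReal_le_ofReal
        rw [← le_div_iff₀ hμtpos] at *
        calc |μt⁻¹ * ∫ y in S, w y| ^ q ≤ μt⁻¹ * ∫ y in S, |w y| ^ q := step3
        _ = (∫ y in S, |w y| ^ q) / μt := by ring

lemma cell_rep (f : ℝ × ℝ → ℝ) (x0 x1 y0 y1 : ℝ) (hx : x0 < x1) (hy : y0 < y1)
    (hB : ∃ a b c d : ℝ, ∀ z ∈ Icc x0 x1 ×ˢ Icc y0 y1,
      f z = a + b*z.1 + c*z.2 + d*(z.1*z.2)) :
    ∀ z ∈ Icc x0 x1 ×ˢ Icc y0 y1,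
      f z = ((x1 - z.1)/(x1-x0) * ((y1 - z.2)/(y1-y0))) * f (x0,y0)
          + ((z.1 - x0)/(x1-x0) * ((y1 - z.2)/(y1-y0))) * f (x1,y0)
          + ((x1 - z.1)/(x1-x0) * ((z.2 - y0)/(y1-y0))) * f (x0,y1)
          + ((z.1 - x0)/(x1-x0) * ((z.2 - y0)/(y1-y0))) * f (x1,y1) := by
  obtain ⟨a, b, c, d, hf⟩ := hB
  intro z hz
  have m00 : ((x0,y0) : ℝ × ℝ) ∈ Icc x0 x1 ×ˢ Icc y0 y1 :=
    ⟨⟨le_refl _, hx.le⟩, ⟨le_refl _, hy.le⟩⟩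
  have m10 : ((x1,y0) : ℝ × ℝ) ∈ Icc x0 x1 ×ˢ Icc y0 y1 :=
    ⟨⟨hx.le, le_refl _⟩, ⟨le_refl _, hy.le⟩⟩
  have m01 : ((x0,y1) : ℝ × ℝ) ∈ Icc x0 x1 ×ˢ Icc y0 y1 :=
    ⟨⟨le_refl _, hx.le⟩, ⟨hy.le, le_refl _⟩⟩
  have m11 : ((x1,y1) : ℝ × ℝ) ∈ Icc x0 x1 ×ˢ Icc y0 y1 :=
    ⟨⟨hx.le, le_refl _⟩, ⟨hy.le, le_refl _⟩⟩
  rw [hf z hz, hf _ m00, hf _ m10, hf _ m01, hf _ m11]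
  exact bilin_rep a b c d x0 x1 y0 y1 z.1 z.2 hx hy

lemma cell_bound_s13 (q : ℝ) (hq : 1 ≤ q) (f : ℝ × ℝ → ℝ) (x0 x1 y0 y1 : ℝ)
    (hx : x0 < x1) (hy : y0 < y1)
    (hB : ∃ a b c d : ℝ, ∀ z ∈ Icc x0 x1 ×ˢ Icc y0 y1,
      f z = a + b*z.1 + c*z.2 + d*(z.1*z.2)) :
    ∫⁻ z in Icc x0 x1 ×ˢ Icc y0 y1, ENNReal.ofReal (|f z| ^ q) ≤
      ENNReal.ofReal ((x1-x0)*(y1-y0)/4) *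
        (ENNReal.ofReal (|f (x0,y0)| ^ q) + ENNReal.ofReal (|f (x1,y0)| ^ q) +
         ENNReal.ofReal (|f (x0,y1)| ^ q) + ENNReal.ofReal (|f (x1,y1)| ^ q)) := by
  have hq0 : 0 < q := lt_of_lt_of_le zero_lt_one hq
  have hxd : 0 < x1 - x0 := by linarith
  have hyd : 0 < y1 - y0 := by linarith
  set U0 : ℝ → ℝ := fun x => (x1 - x)/(x1-x0) with hU0
  set U1 : ℝ → ℝ := fun x => (x - x0)/(x1-x0) with hU1
  set V0 : ℝ → ℝ := fun y => (y1 - y)/(y1-y0) with hV0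
  set V1 : ℝ → ℝ := fun y => (y - y0)/(y1-y0) with hV1
  set c00 := ENNReal.ofReal (|f (x0,y0)| ^ q)
  set c10 := ENNReal.ofReal (|f (x1,y0)| ^ q)
  set c01 := ENNReal.ofReal (|f (x0,y1)| ^ q)
  set c11 := ENNReal.ofReal (|f (x1,y1)| ^ q)
  have hU0m : Measurable U0 := ((continuous_const.sub continuous_id).div_const _).measurable
  have hU1m : Measurable U1 := ((continuous_id.sub continuous_const).div_const _).measurable
  have hV0m : Measurable V0 := ((continuous_const.sub continuous_id).div_const _).measurable
  have hV1m : Measurable V1 := ((continuous_id.sub continuous_const).div_const _).measurable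
  set g : ℝ × ℝ → ℝ≥0∞ := fun z =>
      ENNReal.ofReal (U0 z.1) * ENNReal.ofReal (V0 z.2) * c00
    + ENNReal.ofReal (U1 z.1) * ENNReal.ofReal (V0 z.2) * c10
    + ENNReal.ofReal (U0 z.1) * ENNReal.ofReal (V1 z.2) * c01
    + ENNReal.ofReal (U1 z.1) * ENNReal.ofReal (V1 z.2) * c11 with hg
  have mk : ∀ (U V : ℝ → ℝ) (c : ℝ≥0∞), Measurable U → Measurable V →
      Measurable fun z : ℝ × ℝ => ENNReal.ofReal (U z.1) * ENNReal.ofReal (V z.2) * c :=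
    fun U V c hUm hVm => ((hUm.ennreal_ofReal.comp measurable_fst).mul
      (hVm.ennreal_ofReal.comp measurable_snd)).mul_const _
  have hgm : Measurable g :=
    (((mk U0 V0 c00 hU0m hV0m).add (mk U1 V0 c10 hU1m hV0m)).add
      (mk U0 V1 c01 hU0m hV1m)).add (mk U1 V1 c11 hU1m hV1m)
  have hrep := cell_rep f x0 x1 y0 y1 hx hy hB
  have hpt : ∀ z ∈ Icc x0 x1 ×ˢ Icc y0 y1, ENNReal.ofReal (|f z| ^ q) ≤ g z := by
    intro z hz
    obtain ⟨⟨hz1a, hz1b⟩, hz2a, hz2b⟩ := hz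
    have hU0z : 0 ≤ U0 z.1 := div_nonneg (by linarith) hxd.le
    have hU1z : 0 ≤ U1 z.1 := div_nonneg (by linarith) hxd.le
    have hV0z : 0 ≤ V0 z.2 := div_nonneg (by linarith) hyd.le
    have hV1z : 0 ≤ V1 z.2 := div_nonneg (by linarith) hyd.le
    have hsum : U0 z.1 * V0 z.2 + U1 z.1 * V0 z.2 + U0 z.1 * V1 z.2 + U1 z.1 * V1 z.2 = 1 := by
      rw [hU0, hU1, hV0, hV1]
      field_simp
      ring
    set t00 := |f (x0,y0)| with ht00
    set t10 := |f (x1,y0)| with ht10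
    set t01 := |f (x0,y1)| with ht01
    set t11 := |f (x1,y1)| with ht11
    have habs : |f z| ≤ (U0 z.1 * V0 z.2) * t00 + (U1 z.1 * V0 z.2) * t10
        + (U0 z.1 * V1 z.2) * t01 + (U1 z.1 * V1 z.2) * t11 := by
      rw [hrep z ⟨⟨hz1a, hz1b⟩, hz2a, hz2b⟩]
      have e1 : U0 z.1 * V0 z.2 = (x1 - z.1)/(x1-x0) * ((y1 - z.2)/(y1-y0)) := rfl
      have e2 : U1 z.1 * V0 z.2 = (z.1 - x0)/(x1-x0) * ((y1 - z.2)/(y1-y0)) := rfl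
      have e3 : U0 z.1 * V1 z.2 = (x1 - z.1)/(x1-x0) * ((z.2 - y0)/(y1-y0)) := rfl
      have e4 : U1 z.1 * V1 z.2 = (z.1 - x0)/(x1-x0) * ((z.2 - y0)/(y1-y0)) := rfl
      rw [← e1, ← e2, ← e3, ← e4]
      calc |U0 z.1 * V0 z.2 * f (x0,y0) + U1 z.1 * V0 z.2 * f (x1,y0)
            + U0 z.1 * V1 z.2 * f (x0,y1) + U1 z.1 * V1 z.2 * f (x1,y1)|
          ≤ |U0 z.1 * V0 z.2 * f (x0,y0)| + |U1 z.1 * V0 z.2 * f (x1,y0)|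
            + |U0 z.1 * V1 z.2 * f (x0,y1)| + |U1 z.1 * V1 z.2 * f (x1,y1)| := by
            exact (abs_add_le _ _).trans (by
              gcongr
              exact (abs_add_le _ _).trans (by
                gcongr
                exact abs_add_le _ _))
        _ = (U0 z.1 * V0 z.2) * t00 + (U1 z.1 * V0 z.2) * t10
            + (U0 z.1 * V1 z.2) * t01 + (U1 z.1 * V1 z.2) * t11 := by
            simp only [abs_mul, abs_of_nonneg hU0z, abs_of_nonneg hU1z,
              abs_of_nonneg hV0z, abs_of_nonneg hV1z, ht00, ht10, ht01, ht11]
    have hjq : |f z| ^ q ≤ (U0 z.1 * V0 z.2) * t00 ^ q + (U1 z.1 * V0 z.2) * t10 ^ q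
        + (U0 z.1 * V1 z.2) * t01 ^ q + (U1 z.1 * V1 z.2) * t11 ^ q := by
      calc |f z| ^ q ≤ ((U0 z.1 * V0 z.2) * t00 + (U1 z.1 * V0 z.2) * t10
            + (U0 z.1 * V1 z.2) * t01 + (U1 z.1 * V1 z.2) * t11) ^ q :=
          Real.rpow_le_rpow (abs_nonneg _) habs hq0.le
        _ ≤ _ := jensen4 hq _ _ _ _ _ _ _ _ (mul_nonneg hU0z hV0z) (mul_nonneg hU1z hV0z)
            (mul_nonneg hU0z hV1z) (mul_nonneg hU1z hV1z) hsum
            (abs_nonneg _) (abs_nonneg _) (abs_nonneg _) (abs_nonneg _)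
    calc ENNReal.ofReal (|f z| ^ q) ≤ ENNReal.ofReal ((U0 z.1 * V0 z.2) * t00 ^ q
          + (U1 z.1 * V0 z.2) * t10 ^ q + (U0 z.1 * V1 z.2) * t01 ^ q
          + (U1 z.1 * V1 z.2) * t11 ^ q) := ENNReal.ofReal_le_ofReal hjq
      _ = g z := by
        have n00 : 0 ≤ t00 ^ q := Real.rpow_nonneg (abs_nonneg _) q
        have n10 : 0 ≤ t10 ^ q := Real.rpow_nonneg (abs_nonneg _) q
        have n01 : 0 ≤ t01 ^ q := Real.rpow_nonneg (abs_nonneg _) q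
        have n11 : 0 ≤ t11 ^ q := Real.rpow_nonneg (abs_nonneg _) q
        rw [hg]
        simp only []
        have e00 : ENNReal.ofReal (U0 z.1 * V0 z.2 * t00 ^ q)
            = ENNReal.ofReal (U0 z.1) * ENNReal.ofReal (V0 z.2) * c00 := by
          rw [ENNReal.ofReal_mul (mul_nonneg hU0z hV0z), ENNReal.ofReal_mul hU0z]
        have e10 : ENNReal.ofReal (U1 z.1 * V0 z.2 * t10 ^ q)
            = ENNReal.ofReal (U1 z.1) * ENNReal.ofReal (V0 z.2) * c10 := by
          rw [ENNReal.ofReal_mul (mul_nonneg hU1z hV0z), ENNReal.ofReal_mul hU1z]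
        have e01 : ENNReal.ofReal (U0 z.1 * V1 z.2 * t01 ^ q)
            = ENNReal.ofReal (U0 z.1) * ENNReal.ofReal (V1 z.2) * c01 := by
          rw [ENNReal.ofReal_mul (mul_nonneg hU0z hV1z), ENNReal.ofReal_mul hU0z]
        have e11 : ENNReal.ofReal (U1 z.1 * V1 z.2 * t11 ^ q)
            = ENNReal.ofReal (U1 z.1) * ENNReal.ofReal (V1 z.2) * c11 := by
          rw [ENNReal.ofReal_mul (mul_nonneg hU1z hV1z), ENNReal.ofReal_mul hU1z]
        rw [ENNReal.ofReal_add (by positivity) (by positivity),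
          ENNReal.ofReal_add (by positivity) (by positivity),
          ENNReal.ofReal_add (by positivity) (by positivity),
          e00, e10, e01, e11]
  have intU0 : ∫⁻ x in Icc x0 x1, ENNReal.ofReal (U0 x) = ENNReal.ofReal ((x1-x0)/2) := by
    rw [hU0]
    rw [lint_left x0 x1 (x1-x0) hx.le hxd]
    congr 1
    field_simp
  have intU1 : ∫⁻ x in Icc x0 x1, ENNReal.ofReal (U1 x) = ENNReal.ofReal ((x1-x0)/2) := by
    rw [hU1, lint_right x0 x1 (x1-x0) hx.le hxd]
    congr 1; field_simp
  have intV0 : ∫⁻ y in Icc y0 y1, ENNReal.ofReal (V0 y) = ENNReal.ofReal ((y1-y0)/2) := by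
    rw [hV0, lint_left y0 y1 (y1-y0) hy.le hyd]
    congr 1; field_simp
  have intV1 : ∫⁻ y in Icc y0 y1, ENNReal.ofReal (V1 y) = ENNReal.ofReal ((y1-y0)/2) := by
    rw [hV1, lint_right y0 y1 (y1-y0) hy.le hyd]
    congr 1; field_simp
  have hterm : ∀ (U V : ℝ → ℝ) (cr : ℝ), Measurable U → Measurable V →
      (∫⁻ x in Icc x0 x1, ENNReal.ofReal (U x)) = ENNReal.ofReal ((x1-x0)/2) →
      (∫⁻ y in Icc y0 y1, ENNReal.ofReal (V y)) = ENNReal.ofReal ((y1-y0)/2) →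
      ∫⁻ z in Icc x0 x1 ×ˢ Icc y0 y1,
          ENNReal.ofReal (U z.1) * ENNReal.ofReal (V z.2) * ENNReal.ofReal cr
        = ENNReal.ofReal ((x1-x0)*(y1-y0)/4) * ENNReal.ofReal cr := by
    intro U V cr hUm hVm hU hV
    rw [MeasureTheory.lintegral_mul_const' _ _ ENNReal.ofReal_ne_top,
      lint_prod_split _ _ measurableSet_Icc measurableSet_Icc U V hUm hVm, hU, hV,
      ← ENNReal.ofReal_mul (by positivity)]
    congr 2
    ring
  calc ∫⁻ z in Icc x0 x1 ×ˢ Icc y0 y1, ENNReal.ofReal (|f z| ^ q)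
      ≤ ∫⁻ z in Icc x0 x1 ×ˢ Icc y0 y1, g z := MeasureTheory.setLIntegral_mono hgm hpt
    _ = ENNReal.ofReal ((x1-x0)*(y1-y0)/4) * c00 + ENNReal.ofReal ((x1-x0)*(y1-y0)/4) * c10
      + ENNReal.ofReal ((x1-x0)*(y1-y0)/4) * c01 + ENNReal.ofReal ((x1-x0)*(y1-y0)/4) * c11 := by
        rw [hg]
        simp only []
        rw [MeasureTheory.lintegral_add_left (((mk U0 V0 c00 hU0m hV0m).fun_add
            (mk U1 V0 c10 hU1m hV0m)).fun_add (mk U0 V1 c01 hU0m hV1m)),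
          MeasureTheory.lintegral_add_left ((mk U0 V0 c00 hU0m hV0m).fun_add
            (mk U1 V0 c10 hU1m hV0m)),
          MeasureTheory.lintegral_add_left (mk U0 V0 c00 hU0m hV0m)]
        rw [hterm U0 V0 _ hU0m hV0m intU0 intV0, hterm U1 V0 _ hU1m hV0m intU1 intV0,
          hterm U0 V1 _ hU0m hV1m intU0 intV1, hterm U1 V1 _ hU1m hV1m intU1 intV1]
    _ = ENNReal.ofReal ((x1-x0)*(y1-y0)/4) * (c00 + c10 + c01 + c11) := by ring

lemma lint_biUnion_le {ι : Type*} (s : Finset ι) (t : ι → Set (ℝ × ℝ)) (F : ℝ × ℝ → ℝ≥0∞) :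
    ∫⁻ z in ⋃ i ∈ s, t i, F z ≤ ∑ i ∈ s, ∫⁻ z in t i, F z := by
  classical
  induction s using Finset.induction with
  | empty => simp
  | @insert a s ha ih =>
    rw [Finset.sum_insert ha]
    have hset : ⋃ i ∈ insert a s, t i = t a ∪ ⋃ i ∈ s, t i := by
      simp [Set.biUnion_insert]
    rw [hset]
    calc ∫⁻ z in t a ∪ ⋃ i ∈ s, t i, F z
        ≤ ∫⁻ z, F z ∂(volume.restrict (t a) + volume.restrict (⋃ i ∈ s, t i)) :=
          MeasureTheory.lintegral_mono' (MeasureTheory.Measure.restrict_union_le _ _) le_rfl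
      _ = (∫⁻ z in t a, F z) + ∫⁻ z in ⋃ i ∈ s, t i, F z :=
          MeasureTheory.lintegral_add_measure _ _ _
      _ ≤ (∫⁻ z in t a, F z) + ∑ i ∈ s, ∫⁻ z in t i, F z := by gcongr

lemma lint_biUnion_eq {ι : Type*} (s : Finset ι) (t : ι → Set (ℝ × ℝ)) (F : ℝ × ℝ → ℝ≥0∞)
    (hm : ∀ i ∈ s, MeasurableSet (t i))
    (hd : ∀ i ∈ s, ∀ j ∈ s, i ≠ j → volume (t i ∩ t j) = 0) :
    ∑ i ∈ s, ∫⁻ z in t i, F z = ∫⁻ z in ⋃ i ∈ s, t i, F z := by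
  classical
  induction s using Finset.induction with
  | empty => simp
  | @insert a s ha ih =>
    have hma := hm a (Finset.mem_insert_self a s)
    have hms : ∀ i ∈ s, MeasurableSet (t i) :=
      fun i hi => hm i (Finset.mem_insert_of_mem hi)
    have hU : MeasurableSet (⋃ i ∈ s, t i) :=
      MeasurableSet.biUnion s.countable_toSet (fun i hi => hms i hi)
    have hnull : volume ((⋃ i ∈ s, t i) ∩ t a) = 0 := by
      rw [Set.iUnion₂_inter]
      refine MeasureTheory.measure_biUnion_null_iff s.countable_toSet |>.mpr ?_
      intro i hi
      exact hd i (Finset.mem_insert_of_mem hi) a (Finset.mem_insert_self a s)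
        (by rintro rfl; exact ha hi)
    rw [Finset.sum_insert ha, ih hms
      (fun i hi j hj hij => hd i (Finset.mem_insert_of_mem hi) j (Finset.mem_insert_of_mem hj) hij)]
    have hset : ⋃ i ∈ insert a s, t i = t a ∪ ⋃ i ∈ s, t i := by
      simp [Set.biUnion_insert]
    rw [hset, ← Set.union_diff_self,
      MeasureTheory.Measure.restrict_union' disjoint_sdiff_self_right hma,
      MeasureTheory.Measure.restrict_congr_set
        ((MeasureTheory.diff_ae_eq_self).mpr hnull),
      MeasureTheory.lintegral_add_measure]

lemma QOmg_eq_prod (h₁ h₂ : ℝ) (k l : ℕ) :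
    (Icc ((k : ℝ) * h₁ - h₁ / 2) ((k : ℝ) * h₁ + h₁ / 2) ×ˢ
      Icc ((l : ℝ) * h₂ - h₂ / 2) ((l : ℝ) * h₂ + h₂ / 2)) ∩ (Ioo (0:ℝ) 1 ×ˢ Ioo (0:ℝ) 1)
    = slab h₁ k ×ˢ slab h₂ l := by
  rw [Set.prod_inter_prod]
  rfl

lemma cell_sup_bound (f : ℝ × ℝ → ℝ) (x0 x1 y0 y1 : ℝ) (hx : x0 < x1) (hy : y0 < y1)
    (hB : ∃ a b c d : ℝ, ∀ z ∈ Icc x0 x1 ×ˢ Icc y0 y1,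
      f z = a + b*z.1 + c*z.2 + d*(z.1*z.2))
    (M : ℝ) (h00 : |f (x0,y0)| ≤ M) (h10 : |f (x1,y0)| ≤ M)
    (h01 : |f (x0,y1)| ≤ M) (h11 : |f (x1,y1)| ≤ M) :
    ∀ z ∈ Icc x0 x1 ×ˢ Icc y0 y1, |f z| ≤ M := by
  intro z hz
  have hxd : 0 < x1 - x0 := by linarith
  have hyd : 0 < y1 - y0 := by linarith
  obtain ⟨⟨hz1a, hz1b⟩, hz2a, hz2b⟩ := hz
  have hU0z : 0 ≤ (x1 - z.1)/(x1-x0) := div_nonneg (by linarith) hxd.le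
  have hU1z : 0 ≤ (z.1 - x0)/(x1-x0) := div_nonneg (by linarith) hxd.le
  have hV0z : 0 ≤ (y1 - z.2)/(y1-y0) := div_nonneg (by linarith) hyd.le
  have hV1z : 0 ≤ (z.2 - y0)/(y1-y0) := div_nonneg (by linarith) hyd.le
  have hsum : (x1 - z.1)/(x1-x0) * ((y1 - z.2)/(y1-y0)) + (z.1 - x0)/(x1-x0) * ((y1 - z.2)/(y1-y0))
      + (x1 - z.1)/(x1-x0) * ((z.2 - y0)/(y1-y0)) + (z.1 - x0)/(x1-x0) * ((z.2 - y0)/(y1-y0)) = 1 := by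
    field_simp
    ring
  rw [cell_rep f x0 x1 y0 y1 hx hy hB z ⟨⟨hz1a, hz1b⟩, hz2a, hz2b⟩]
  have tri : |(x1 - z.1)/(x1-x0) * ((y1 - z.2)/(y1-y0)) * f (x0,y0)
      + (z.1 - x0)/(x1-x0) * ((y1 - z.2)/(y1-y0)) * f (x1,y0)
      + (x1 - z.1)/(x1-x0) * ((z.2 - y0)/(y1-y0)) * f (x0,y1)
      + (z.1 - x0)/(x1-x0) * ((z.2 - y0)/(y1-y0)) * f (x1,y1)|
      ≤ |(x1 - z.1)/(x1-x0) * ((y1 - z.2)/(y1-y0)) * f (x0,y0)|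
      + |(z.1 - x0)/(x1-x0) * ((y1 - z.2)/(y1-y0)) * f (x1,y0)|
      + |(x1 - z.1)/(x1-x0) * ((z.2 - y0)/(y1-y0)) * f (x0,y1)|
      + |(z.1 - x0)/(x1-x0) * ((z.2 - y0)/(y1-y0)) * f (x1,y1)| := by
    exact (abs_add_le _ _).trans (by
      gcongr
      exact (abs_add_le _ _).trans (by
        gcongr
        exact abs_add_le _ _))
  refine tri.trans ?_
  simp only [abs_mul, abs_of_nonneg hU0z, abs_of_nonneg hU1z,
    abs_of_nonneg hV0z, abs_of_nonneg hV1z]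
  have hM : 0 ≤ M := le_trans (abs_nonneg _) h00
  calc (x1 - z.1)/(x1-x0) * ((y1 - z.2)/(y1-y0)) * |f (x0,y0)|
      + (z.1 - x0)/(x1-x0) * ((y1 - z.2)/(y1-y0)) * |f (x1,y0)|
      + (x1 - z.1)/(x1-x0) * ((z.2 - y0)/(y1-y0)) * |f (x0,y1)|
      + (z.1 - x0)/(x1-x0) * ((z.2 - y0)/(y1-y0)) * |f (x1,y1)|
      ≤ (x1 - z.1)/(x1-x0) * ((y1 - z.2)/(y1-y0)) * M
      + (z.1 - x0)/(x1-x0) * ((y1 - z.2)/(y1-y0)) * M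
      + (x1 - z.1)/(x1-x0) * ((z.2 - y0)/(y1-y0)) * M
      + (z.1 - x0)/(x1-x0) * ((z.2 - y0)/(y1-y0)) * M := by
        gcongr
    _ = M := by rw [← add_mul, ← add_mul, ← add_mul, hsum, one_mul]

lemma sum2d (N₁ N₂ : ℕ) (h1 : 0 < N₁) (h2 : 0 < N₂) (F : ℕ → ℕ → ℝ≥0∞) :
    ∑ k ∈ Finset.range N₁, ∑ l ∈ Finset.range N₂,
      (F k l + F (k+1) l + F k (l+1) + F (k+1) (l+1))
    = ∑ k ∈ Finset.range (N₁+1), ∑ l ∈ Finset.range (N₂+1),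
        ((if k = 0 ∨ k = N₁ then 1 else 2) * (if l = 0 ∨ l = N₂ then 1 else 2)) * F k l := by
  have step1 : ∀ k, ∑ l ∈ Finset.range N₂, (F k l + F (k+1) l + F k (l+1) + F (k+1) (l+1))
      = ∑ l ∈ Finset.range (N₂+1), (if l = 0 ∨ l = N₂ then (1:ℝ≥0∞) else 2) * (F k l + F (k+1) l) := by
    intro k
    rw [← sum1d N₂ h2 (fun l => F k l + F (k+1) l)]
    apply Finset.sum_congr rfl
    intro l _
    ring
  calc ∑ k ∈ Finset.range N₁, ∑ l ∈ Finset.range N₂,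
        (F k l + F (k+1) l + F k (l+1) + F (k+1) (l+1))
      = ∑ k ∈ Finset.range N₁, ∑ l ∈ Finset.range (N₂+1),
          (if l = 0 ∨ l = N₂ then (1:ℝ≥0∞) else 2) * (F k l + F (k+1) l) :=
        Finset.sum_congr rfl (fun k _ => step1 k)
    _ = ∑ l ∈ Finset.range (N₂+1), ∑ k ∈ Finset.range N₁,
          ((if l = 0 ∨ l = N₂ then (1:ℝ≥0∞) else 2) * F k l
            + (if l = 0 ∨ l = N₂ then (1:ℝ≥0∞) else 2) * F (k+1) l) := by
        rw [Finset.sum_comm]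
        exact Finset.sum_congr rfl (fun l _ => Finset.sum_congr rfl (fun k _ => mul_add _ _ _))
    _ = ∑ l ∈ Finset.range (N₂+1), ∑ k ∈ Finset.range (N₁+1),
          (if k = 0 ∨ k = N₁ then (1:ℝ≥0∞) else 2) *
            ((if l = 0 ∨ l = N₂ then (1:ℝ≥0∞) else 2) * F k l) :=
        Finset.sum_congr rfl (fun l _ =>
          sum1d N₁ h1 (fun k => (if l = 0 ∨ l = N₂ then (1:ℝ≥0∞) else 2) * F k l))
    _ = _ := by
        rw [Finset.sum_comm]
        exact Finset.sum_congr rfl (fun k _ => Finset.sum_congr rfl (fun l _ => by ring))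

lemma QOmg_eq_slab (h₁ h₂ : ℝ) (k l : ℕ) :
    QOmg h₁ h₂ (k : ℤ) (l : ℤ) = slab h₁ k ×ˢ slab h₂ l := by
  unfold QOmg OmgO
  push_cast
  exact QOmg_eq_prod h₁ h₂ k l

lemma cell_eq_prod (h₁ h₂ : ℝ) (k l : ℕ) :
    cell h₁ h₂ (k : ℤ) (l : ℤ) =
      Icc ((k : ℝ) * h₁) (((k : ℝ) + 1) * h₁) ×ˢ Icc ((l : ℝ) * h₂) (((l : ℝ) + 1) * h₂) := by
  unfold cell
  push_cast
  rfl

/-- L^p-stability of `𝒞_h`, `1 ≤ p ≤ ∞`. -/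
theorem stmt13 (N₁ N₂ : ℕ) (hN₁ : 0 < N₁) (hN₂ : 0 < N₂) (h₁ h₂ : ℝ)
    (hh₁ : h₁ = 1 / N₁) (hh₂ : h₂ = 1 / N₂)
    (p : ℝ≥0∞) (hp : 1 ≤ p)
    (w : ℝ × ℝ → ℝ) (hwp : MemLp w p (volume.restrict OmgO))
    (Ch : ℝ × ℝ → ℝ) (hCh : IsCInterp N₁ N₂ h₁ h₂ w Ch) :
    eLpNorm Ch p (volume.restrict OmgO) ≤ eLpNorm w p (volume.restrict OmgO) := by
  obtain ⟨hcont, hbil, hnode⟩ := hCh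
  have hN₁R : (0:ℝ) < N₁ := by exact_mod_cast hN₁
  have hN₂R : (0:ℝ) < N₂ := by exact_mod_cast hN₂
  have hh₁pos : 0 < h₁ := by rw [hh₁]; positivity
  have hh₂pos : 0 < h₂ := by rw [hh₂]; positivity
  have hslabm₁ : ∀ k : ℕ, MeasurableSet (slab h₁ k) :=
    fun k => measurableSet_Icc.inter measurableSet_Ioo
  have hslabm₂ : ∀ l : ℕ, MeasurableSet (slab h₂ l) :=
    fun l => measurableSet_Icc.inter measurableSet_Ioo
  have hOm : MeasurableSet OmgO := measurableSet_Ioo.prod measurableSet_Ioo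
  -- volume of node neighborhoods
  have vol_q : ∀ k l : ℕ, k ≤ N₁ → l ≤ N₂ →
      volume (slab h₁ k ×ˢ slab h₂ l) =
        ENNReal.ofReal (if k = 0 ∨ k = N₁ then h₁/2 else h₁) *
        ENNReal.ofReal (if l = 0 ∨ l = N₂ then h₂/2 else h₂) := by
    intro k l hk hl
    rw [MeasureTheory.Measure.volume_eq_prod, MeasureTheory.Measure.prod_prod,
      volume_slab N₁ hN₁ h₁ hh₁ k hk, volume_slab N₂ hN₂ h₂ hh₂ l hl]
  have vol_q_ne_zero : ∀ k l : ℕ, k ≤ N₁ → l ≤ N₂ →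
      volume (slab h₁ k ×ˢ slab h₂ l) ≠ 0 := by
    intro k l hk hl
    rw [vol_q k l hk hl]
    apply mul_ne_zero <;>
    · rw [Ne, ENNReal.ofReal_eq_zero, not_le]
      split <;> positivity
  have vol_q_ne_top : ∀ k l : ℕ, k ≤ N₁ → l ≤ N₂ →
      volume (slab h₁ k ×ˢ slab h₂ l) ≠ ⊤ := by
    intro k l hk hl
    rw [vol_q k l hk hl]
    exact ENNReal.mul_ne_top ENNReal.ofReal_ne_top ENNReal.ofReal_ne_top
  have hsub : ∀ k l : ℕ, slab h₁ k ×ˢ slab h₂ l ⊆ OmgO := by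
    intro k l z hz
    exact ⟨hz.1.2, hz.2.2⟩
  -- finiteness of restricted measure on Ω
  haveI hfinΩ : MeasureTheory.IsFiniteMeasure (volume.restrict OmgO) := by
    constructor
    rw [MeasureTheory.Measure.restrict_apply_univ]
    unfold OmgO
    rw [MeasureTheory.Measure.volume_eq_prod, MeasureTheory.Measure.prod_prod]
    simp [Real.volume_Ioo]
  -- integrability of w
  have hw1 : MeasureTheory.Integrable w (volume.restrict OmgO) :=
    MeasureTheory.memLp_one_iff_integrable.mp (hwp.mono_exponent hp)
  have hw1' : MeasureTheory.IntegrableOn w OmgO volume := hw1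
  have hw1Q : ∀ k l : ℕ, MeasureTheory.IntegrableOn w (slab h₁ k ×ˢ slab h₂ l) volume :=
    fun k l => hw1'.mono_set (hsub k l)
  -- node values
  have hnodeW : ∀ k l : ℕ, k ≤ N₁ → l ≤ N₂ →
      Ch ((k : ℝ) * h₁, (l : ℝ) * h₂) =
        (volume (slab h₁ k ×ˢ slab h₂ l)).toReal⁻¹ * ∫ y in slab h₁ k ×ˢ slab h₂ l, w y := by
    intro k l hk hl
    rw [hnode k l hk hl, QOmg_eq_slab]
  -- the 2D cell cover of Ω
  have hcover : OmgO ⊆ ⋃ kl ∈ Finset.range N₁ ×ˢ Finset.range N₂,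
      Icc ((kl.1 : ℝ) * h₁) (((kl.1 : ℝ) + 1) * h₁) ×ˢ
      Icc ((kl.2 : ℝ) * h₂) (((kl.2 : ℝ) + 1) * h₂) := by
    rintro ⟨x, y⟩ ⟨hx, hy⟩
    obtain ⟨s₁, hs₁, hxs⟩ := Set.mem_iUnion₂.mp (cell_cover N₁ hN₁ h₁ hh₁ hx)
    obtain ⟨s₂, hs₂, hys⟩ := Set.mem_iUnion₂.mp (cell_cover N₂ hN₂ h₂ hh₂ hy)
    exact Set.mem_iUnion₂.mpr ⟨(s₁, s₂), Finset.mem_product.mpr ⟨hs₁, hs₂⟩, ⟨hxs, hys⟩⟩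
  rcases eq_or_ne p ⊤ with rfl | hptop
  · set M := eLpNorm w ⊤ (volume.restrict OmgO) with hM
    rcases eq_or_ne M ⊤ with hMtop | hMtop
    · exact le_top.trans hMtop.ge
    · set Mt := M.toReal with hMt
      have hMt0 : 0 ≤ Mt := ENNReal.toReal_nonneg
      have hwM : ∀ᵐ z ∂(volume.restrict OmgO), ‖w z‖ ≤ Mt := by
        have h1 : ∀ᵐ z ∂(volume.restrict OmgO),
            (‖w z‖₊ : ℝ≥0∞) ≤ eLpNormEssSup w (volume.restrict OmgO) :=
          MeasureTheory.ae_le_eLpNormEssSup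
        have hMe : eLpNormEssSup w (volume.restrict OmgO) = M := by
          rw [hM, MeasureTheory.eLpNorm_exponent_top]
        filter_upwards [h1] with z hz
        rw [hMe] at hz
        have h2 := ENNReal.toReal_mono hMtop hz
        simpa using h2
      have hWb : ∀ k l : ℕ, k ≤ N₁ → l ≤ N₂ → |Ch ((k:ℝ)*h₁, (l:ℝ)*h₂)| ≤ Mt := by
        intro k l hk hl
        rw [hnodeW k l hk hl]
        set S := slab h₁ k ×ˢ slab h₂ l with hS
        have hfin := vol_q_ne_top k l hk hl
        have hne := vol_q_ne_zero k l hk hl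
        rw [← hS] at hfin hne
        have hμpos : 0 < (volume S).toReal := ENNReal.toReal_pos hne hfin
        have hint : ‖∫ y in S, w y‖ ≤ Mt * (volume S).toReal := by
          apply MeasureTheory.norm_setIntegral_le_of_norm_le_const_ae hfin.lt_top
          exact MeasureTheory.ae_restrict_of_ae_restrict_of_subset (hsub k l) hwM
        rw [Real.norm_eq_abs] at hint
        rw [abs_mul, abs_of_nonneg (inv_nonneg.mpr hμpos.le)]
        calc (volume S).toReal⁻¹ * |∫ y in S, w y|
            ≤ (volume S).toReal⁻¹ * (Mt * (volume S).toReal) := by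
              exact mul_le_mul_of_nonneg_left hint (inv_nonneg.mpr hμpos.le)
          _ = Mt := by field_simp
      have hptw : ∀ z ∈ OmgO, |Ch z| ≤ Mt := by
        intro z hz
        obtain ⟨kl, hkl, hzc⟩ := Set.mem_iUnion₂.mp (hcover hz)
        obtain ⟨hk, hl⟩ := Finset.mem_product.mp hkl
        rw [Finset.mem_range] at hk hl
        have hx01 : (kl.1:ℝ)*h₁ < ((kl.1:ℝ)+1)*h₁ := by nlinarith
        have hy01 : (kl.2:ℝ)*h₂ < ((kl.2:ℝ)+1)*h₂ := by nlinarith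
        have hB := hbil kl.1 kl.2 hk hl
        unfold IsBilinearOn at hB
        rw [cell_eq_prod h₁ h₂ kl.1 kl.2] at hB
        refine cell_sup_bound Ch _ _ _ _ hx01 hy01 hB Mt ?_ ?_ ?_ ?_ z hzc
        · exact hWb kl.1 kl.2 hk.le hl.le
        · have := hWb (kl.1+1) kl.2 (by omega) hl.le
          push_cast at this
          exact this
        · have := hWb kl.1 (kl.2+1) hk.le (by omega)
          push_cast at this
          exact this
        · have := hWb (kl.1+1) (kl.2+1) (by omega) (by omega)
          push_cast at this
          exact this
      have hfinal : eLpNorm Ch ⊤ (volume.restrict OmgO) ≤ ENNReal.ofReal Mt := by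
        rw [MeasureTheory.eLpNorm_exponent_top]
        apply MeasureTheory.eLpNormEssSup_le_of_ae_bound (C := Mt)
        rw [MeasureTheory.ae_restrict_iff' hOm]
        exact MeasureTheory.ae_of_all _
          (fun z hz => by simpa [Real.norm_eq_abs] using hptw z hz)
      exact hfinal.trans (le_of_eq (ENNReal.ofReal_toReal hMtop))
  · -- p finite
    have hp0 : p ≠ 0 := by
      intro h
      rw [h] at hp
      simp at hp
    set q := p.toReal with hqdef
    have hq1 : 1 ≤ q := by
      have := ENNReal.toReal_mono hptop hp
      simpa using this
    have hq0 : 0 < q := lt_of_lt_of_le zero_lt_one hq1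
    -- measurable representative of w
    have hw_aem : AEMeasurable w (volume.restrict OmgO) :=
      hwp.aestronglyMeasurable.aemeasurable
    set w' := hw_aem.mk w with hw'def
    have hw'm : Measurable w' := hw_aem.measurable_mk
    have heq : w =ᵐ[volume.restrict OmgO] w' := hw_aem.ae_eq_mk
    have hwp' : MemLp w' p (volume.restrict OmgO) := hwp.ae_eq heq
    have hw1'' : MeasureTheory.Integrable w' (volume.restrict OmgO) :=
      MeasureTheory.memLp_one_iff_integrable.mp (hwp'.mono_exponent hp)
    have hw1Ω : MeasureTheory.IntegrableOn w' OmgO volume := hw1''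
    have hw1Q' : ∀ k l : ℕ, MeasureTheory.IntegrableOn w' (slab h₁ k ×ˢ slab h₂ l) volume :=
      fun k l => hw1Ω.mono_set (hsub k l)
    have hwq : MeasureTheory.Integrable (fun z => |w' z| ^ q) (volume.restrict OmgO) := by
      have := hwp'.integrable_norm_rpow hp0 hptop
      simpa [Real.norm_eq_abs] using this
    have hwqΩ : MeasureTheory.IntegrableOn (fun z => |w' z| ^ q) OmgO volume := hwq
    have hwqQ : ∀ k l : ℕ,
        MeasureTheory.IntegrableOn (fun z => |w' z| ^ q) (slab h₁ k ×ˢ slab h₂ l) volume :=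
      fun k l => hwqΩ.mono_set (hsub k l)
    have hinteq : ∀ k l : ℕ,
        (∫ y in slab h₁ k ×ˢ slab h₂ l, w y) = ∫ y in slab h₁ k ×ˢ slab h₂ l, w' y :=
      fun k l => MeasureTheory.integral_congr_ae
        (MeasureTheory.ae_restrict_of_ae_restrict_of_subset (hsub k l) heq)
    set G : ℕ → ℕ → ℝ≥0∞ :=
      fun k l => ENNReal.ofReal (|Ch ((k:ℝ)*h₁, (l:ℝ)*h₂)| ^ q) with hG
    have hnodebound : ∀ k l : ℕ, k ≤ N₁ → l ≤ N₂ →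
        G k l * volume (slab h₁ k ×ˢ slab h₂ l) ≤
          ∫⁻ y in slab h₁ k ×ˢ slab h₂ l, ENNReal.ofReal (|w' y| ^ q) := by
      intro k l hk hl
      simp only [hG]
      rw [hnodeW k l hk hl, hinteq k l]
      exact node_bound q hq1 w' _ ((hslabm₁ k).prod (hslabm₂ l))
        (vol_q_ne_zero k l hk hl) (vol_q_ne_top k l hk hl) (hw1Q' k l) (hwqQ k l)
    have coeff : ∀ (N : ℕ) (h : ℝ), 0 < h → ∀ k : ℕ,
        (if k = 0 ∨ k = N then (1:ℝ≥0∞) else 2) * ENNReal.ofReal (h/2)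
          = ENNReal.ofReal (if k = 0 ∨ k = N then h/2 else h) := by
      intro N h hh k
      split
      · rw [one_mul]
      · rw [show ((2:ℝ≥0∞)) = ENNReal.ofReal 2 by norm_num, ← ENNReal.ofReal_mul (by norm_num)]
        congr 1
        ring
    have main : ∫⁻ z in OmgO, ENNReal.ofReal (|Ch z| ^ q) ≤
        ∫⁻ z in OmgO, ENNReal.ofReal (|w' z| ^ q) := by
      calc ∫⁻ z in OmgO, ENNReal.ofReal (|Ch z| ^ q)
          ≤ ∫⁻ z in ⋃ kl ∈ Finset.range N₁ ×ˢ Finset.range N₂,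
              (Icc ((kl.1 : ℝ) * h₁) (((kl.1 : ℝ) + 1) * h₁) ×ˢ
               Icc ((kl.2 : ℝ) * h₂) (((kl.2 : ℝ) + 1) * h₂)),
              ENNReal.ofReal (|Ch z| ^ q) :=
            MeasureTheory.lintegral_mono'
              (MeasureTheory.Measure.restrict_mono hcover le_rfl) le_rfl
        _ ≤ ∑ kl ∈ Finset.range N₁ ×ˢ Finset.range N₂,
              ∫⁻ z in Icc ((kl.1 : ℝ) * h₁) (((kl.1 : ℝ) + 1) * h₁) ×ˢ
               Icc ((kl.2 : ℝ) * h₂) (((kl.2 : ℝ) + 1) * h₂),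
              ENNReal.ofReal (|Ch z| ^ q) := lint_biUnion_le _ _ _
        _ ≤ ∑ kl ∈ Finset.range N₁ ×ˢ Finset.range N₂,
              ENNReal.ofReal (h₁*h₂/4) * (G kl.1 kl.2 + G (kl.1+1) kl.2
                + G kl.1 (kl.2+1) + G (kl.1+1) (kl.2+1)) := by
            apply Finset.sum_le_sum
            intro kl hkl
            obtain ⟨hk, hl⟩ := Finset.mem_product.mp hkl
            rw [Finset.mem_range] at hk hl
            have hx01 : (kl.1:ℝ)*h₁ < ((kl.1:ℝ)+1)*h₁ := by nlinarith
            have hy01 : (kl.2:ℝ)*h₂ < ((kl.2:ℝ)+1)*h₂ := by nlinarith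
            have hB := hbil kl.1 kl.2 hk hl
            unfold IsBilinearOn at hB
            rw [cell_eq_prod h₁ h₂ kl.1 kl.2] at hB
            refine (cell_bound_s13 q hq1 Ch _ _ _ _ hx01 hy01 hB).trans (le_of_eq ?_)
            simp only [hG]
            push_cast
            congr 2
            ring
        _ = ∑ k ∈ Finset.range N₁, ∑ l ∈ Finset.range N₂,
              ((ENNReal.ofReal (h₁*h₂/4) * G k l) + (ENNReal.ofReal (h₁*h₂/4) * G (k+1) l)
                + (ENNReal.ofReal (h₁*h₂/4) * G k (l+1))
                + (ENNReal.ofReal (h₁*h₂/4) * G (k+1) (l+1))) := by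
            rw [Finset.sum_product]
            exact Finset.sum_congr rfl (fun k _ => Finset.sum_congr rfl (fun l _ => by ring))
        _ = ∑ k ∈ Finset.range (N₁+1), ∑ l ∈ Finset.range (N₂+1),
              ((if k = 0 ∨ k = N₁ then (1:ℝ≥0∞) else 2) *
               (if l = 0 ∨ l = N₂ then (1:ℝ≥0∞) else 2)) *
                (ENNReal.ofReal (h₁*h₂/4) * G k l) :=
            sum2d N₁ N₂ hN₁ hN₂ (fun k l => ENNReal.ofReal (h₁*h₂/4) * G k l)
        _ = ∑ k ∈ Finset.range (N₁+1), ∑ l ∈ Finset.range (N₂+1),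
              volume (slab h₁ k ×ˢ slab h₂ l) * G k l := by
            apply Finset.sum_congr rfl
            intro k hk
            apply Finset.sum_congr rfl
            intro l hl
            rw [Finset.mem_range] at hk hl
            rw [vol_q k l (by omega) (by omega),
              ← coeff N₁ h₁ hh₁pos k, ← coeff N₂ h₂ hh₂pos l]
            rw [show ENNReal.ofReal (h₁*h₂/4)
                = ENNReal.ofReal (h₁/2) * ENNReal.ofReal (h₂/2) by
              rw [← ENNReal.ofReal_mul (by positivity)]
              congr 1
              ring]
            ring
        _ ≤ ∑ k ∈ Finset.range (N₁+1), ∑ l ∈ Finset.range (N₂+1),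
              ∫⁻ y in slab h₁ k ×ˢ slab h₂ l, ENNReal.ofReal (|w' y| ^ q) := by
            apply Finset.sum_le_sum
            intro k hk
            apply Finset.sum_le_sum
            intro l hl
            rw [Finset.mem_range] at hk hl
            rw [mul_comm]
            exact hnodebound k l (by omega) (by omega)
        _ = ∑ kl ∈ Finset.range (N₁+1) ×ˢ Finset.range (N₂+1),
              ∫⁻ y in slab h₁ kl.1 ×ˢ slab h₂ kl.2, ENNReal.ofReal (|w' y| ^ q) := by
            rw [Finset.sum_product]
        _ = ∫⁻ y in ⋃ kl ∈ Finset.range (N₁+1) ×ˢ Finset.range (N₂+1),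
              slab h₁ kl.1 ×ˢ slab h₂ kl.2, ENNReal.ofReal (|w' y| ^ q) := by
            apply lint_biUnion_eq
            · exact fun kl _ => (hslabm₁ kl.1).prod (hslabm₂ kl.2)
            · intro i hi j hj hij
              rw [Set.prod_inter_prod, MeasureTheory.Measure.volume_eq_prod,
                MeasureTheory.Measure.prod_prod]
              rcases Decidable.eq_or_ne i.1 j.1 with h1 | h1
              · have h2 : i.2 ≠ j.2 := fun h2 => hij (Prod.ext h1 h2)
                rw [slab_disj h₂ hh₂pos i.2 j.2 h2, mul_zero]
              · rw [slab_disj h₁ hh₁pos i.1 j.1 h1, zero_mul]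
        _ ≤ ∫⁻ z in OmgO, ENNReal.ofReal (|w' z| ^ q) := by
            apply MeasureTheory.lintegral_mono'
              (MeasureTheory.Measure.restrict_mono ?_ le_rfl) le_rfl
            exact Set.iUnion₂_subset (fun kl _ => hsub kl.1 kl.2)
    rw [MeasureTheory.eLpNorm_congr_ae heq,
      MeasureTheory.eLpNorm_eq_lintegral_rpow_enorm_toReal hp0 hptop,
      MeasureTheory.eLpNorm_eq_lintegral_rpow_enorm_toReal hp0 hptop]
    apply ENNReal.rpow_le_rpow _ (by positivity : (0:ℝ) ≤ 1/q)
    have conv : ∀ (f : ℝ × ℝ → ℝ) (z : ℝ × ℝ),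
        ((‖f z‖ₑ : ℝ≥0∞)) ^ q = ENNReal.ofReal (|f z| ^ q) := by
      intro f z
      rw [Real.enorm_eq_ofReal_abs, ← ENNReal.ofReal_rpow_of_nonneg (abs_nonneg _) hq0.le]
    rw [← hqdef]
    simp_rw [conv]
    exact main
end
end
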